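/- arXiv:2412.07952 — 4 statements merged into one kernel-verified Lean document; each statement's English description precedes it below -/
import Mathlib

section
/- The expected area of a random triangle with i.i.d. uniform vertices in the unit square equals 11/144. -/
open MeasureTheory Set Function Pointwise intervalIntegral

noncomputable section

local notation "E2" => EuclideanSpace ℝ (Fin 2)


lemma poly_int {F f : ℝ → ℝ} {A B : ℝ} (hd : ∀ x, HasDerivAt F (f x) x) (hc : Continuous f) :
    ∫ y in A..B, f y = F B - F A :=
  intervalIntegral.integral_eq_sub_of_hasDerivAt (fun x _ => hd x) (hc.intervalIntegrable A B)

lemma int_quad (p q r A B : ℝ) :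
    ∫ y in A..B, (p*y^2 + q*y + r)
      = p*(B^3-A^3)/3 + q*(B^2-A^2)/2 + r*(B-A) := by
  rw [poly_int (F := fun y => p/3*y^3 + (q/2*y^2 + r*y)) (fun x => ?_) (by fun_prop)]
  · ring
  · have H := ((hasDerivAt_pow 3 x).const_mul (p/3)).add
      (((hasDerivAt_pow 2 x).const_mul (q/2)).add ((hasDerivAt_id x).const_mul r))
    simp only [id_eq] at H
    refine H.congr_deriv ?_
    beta_reduce; push_cast; ring

lemma int_cubic (p q r s A B : ℝ) :
    ∫ y in A..B, (p*y^3 + q*y^2 + r*y + s)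
      = p*(B^4-A^4)/4 + q*(B^3-A^3)/3 + r*(B^2-A^2)/2 + s*(B-A) := by
  rw [poly_int (F := fun y => p/4*y^4 + (q/3*y^3 + (r/2*y^2 + s*y))) (fun x => ?_) (by fun_prop)]
  · ring
  · have H := ((hasDerivAt_pow 4 x).const_mul (p/4)).add
      (((hasDerivAt_pow 3 x).const_mul (q/3)).add
        (((hasDerivAt_pow 2 x).const_mul (r/2)).add ((hasDerivAt_id x).const_mul s)))
    simp only [id_eq] at H
    refine H.congr_deriv ?_
    beta_reduce; push_cast; ring

lemma K1 {s t : ℝ} (hs : 0 < s) (h0 : 0 ≤ t) (hts : t ≤ s) :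
    ∫ y in (0:ℝ)..1, |s*y - t| = (t^2 + (s-t)^2)/(2*s) := by
  have hc : t/s ∈ Set.Icc (0:ℝ) 1 := ⟨div_nonneg h0 hs.le, by
    rw [div_le_one hs]; exact hts⟩
  have hcont : Continuous fun y : ℝ => |s*y - t| := by fun_prop
  have hsplit : (∫ y in (0:ℝ)..(t/s), |s*y - t|) + (∫ y in (t/s)..1, |s*y - t|)
      = ∫ y in (0:ℝ)..1, |s*y - t| :=
    intervalIntegral.integral_add_adjacent_intervals
      (hcont.intervalIntegrable _ _) (hcont.intervalIntegrable _ _)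
  rw [← hsplit]
  have e1 : ∫ y in (0:ℝ)..(t/s), |s*y - t| = ∫ y in (0:ℝ)..(t/s), (-s*y + t) := by
    apply intervalIntegral.integral_congr
    intro y hy
    rw [Set.uIcc_of_le hc.1] at hy
    have : s*y ≤ t := by
      have := hy.2
      calc s*y ≤ s*(t/s) := by nlinarith [hy.2]
        _ = t := by field_simp
    show |s*y - t| = -s*y + t
    rw [abs_of_nonpos (by linarith)]; ring
  have e2 : ∫ y in (t/s)..1, |s*y - t| = ∫ y in (t/s)..1, (s*y - t) := by
    apply intervalIntegral.integral_congr
    intro y hy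
    rw [Set.uIcc_of_le hc.2] at hy
    have : t ≤ s*y := by
      calc t = s*(t/s) := by field_simp
        _ ≤ s*y := by nlinarith [hy.1]
    show |s*y - t| = s*y - t
    rw [abs_of_nonneg (by linarith)]
  have q1 : ∫ y in (0:ℝ)..(t/s), ((0:ℝ)*y^2 + (-s)*y + t) = _ := int_quad 0 (-s) t 0 (t/s)
  have q2 : ∫ y in (t/s)..1, ((0:ℝ)*y^2 + s*y + (-t)) = _ := int_quad 0 s (-t) (t/s) 1
  rw [e1, e2]
  have e1' : ∫ y in (0:ℝ)..(t/s), (-s*y + t) = ∫ y in (0:ℝ)..(t/s), ((0:ℝ)*y^2 + (-s)*y + t) := by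
    apply intervalIntegral.integral_congr; intro y _; ring
  have e2' : ∫ y in (t/s)..1, (s*y - t) = ∫ y in (t/s)..1, ((0:ℝ)*y^2 + s*y + (-t)) := by
    apply intervalIntegral.integral_congr; intro y _; ring
  rw [e1', e2', q1, q2]
  field_simp
  ring



lemma volume_corner_prod :
    volume {p : ℝ × ℝ | 0 ≤ p.1 ∧ 0 ≤ p.2 ∧ p.1 + p.2 ≤ 1} = ENNReal.ofReal (1/2) := by
  have hmeas : MeasurableSet {p : ℝ × ℝ | 0 ≤ p.1 ∧ 0 ≤ p.2 ∧ p.1 + p.2 ≤ 1} := by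
    apply MeasurableSet.inter
    · exact measurableSet_le measurable_const measurable_fst
    apply MeasurableSet.inter
    · exact measurableSet_le measurable_const measurable_snd
    · exact measurableSet_le (measurable_fst.add measurable_snd) measurable_const
  rw [Measure.volume_eq_prod, Measure.prod_apply hmeas]
  have hslice : (fun x : ℝ => volume (Prod.mk x ⁻¹' {p : ℝ × ℝ | 0 ≤ p.1 ∧ 0 ≤ p.2 ∧ p.1 + p.2 ≤ 1}))
      = Set.indicator (Icc (0:ℝ) 1) (fun x => ENNReal.ofReal (1 - x)) := by
    funext x
    by_cases hx : 0 ≤ x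
    · have : Prod.mk x ⁻¹' {p : ℝ × ℝ | 0 ≤ p.1 ∧ 0 ≤ p.2 ∧ p.1 + p.2 ≤ 1} = Icc 0 (1 - x) := by
        ext y; simp only [mem_preimage, mem_setOf_eq, mem_Icc]
        constructor
        · rintro ⟨_, h2, h3⟩; exact ⟨h2, by linarith⟩
        · rintro ⟨h2, h3⟩; exact ⟨hx, h2, by linarith⟩
      rw [this, Real.volume_Icc]
      by_cases hx1 : x ≤ 1
      · rw [Set.indicator_of_mem (mem_Icc.2 ⟨hx, hx1⟩)]; norm_num
      · rw [Set.indicator_of_notMem (by simp [mem_Icc]; intro; linarith)]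
        rw [ENNReal.ofReal_eq_zero.2 (by linarith)]
    · have : Prod.mk x ⁻¹' {p : ℝ × ℝ | 0 ≤ p.1 ∧ 0 ≤ p.2 ∧ p.1 + p.2 ≤ 1} = ∅ := by
        ext y; simp only [mem_preimage, mem_setOf_eq, mem_empty_iff_false, iff_false]
        rintro ⟨h1, _, _⟩; exact hx h1
      rw [this, Set.indicator_of_notMem (by simp [mem_Icc]; intro h; exact absurd h hx)]
      simp
  rw [hslice, lintegral_indicator measurableSet_Icc]
  have : ∫⁻ x in Icc (0:ℝ) 1, ENNReal.ofReal (1 - x)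
      = ENNReal.ofReal (∫ x in Icc (0:ℝ) 1, (1 - x)) := by
    rw [← ofReal_integral_eq_lintegral_ofReal]
    · exact (continuous_const.sub continuous_id).integrableOn_Icc
    · filter_upwards [ae_restrict_mem measurableSet_Icc] with x hx
      simp only [mem_Icc] at hx
      show (0:ℝ) ≤ 1 - x
      linarith [hx.2]
  rw [this]
  congr 1
  rw [integral_Icc_eq_integral_Ioc, ← intervalIntegral.integral_of_le (by norm_num : (0:ℝ) ≤ 1)]
  simp [intervalIntegral.integral_sub intervalIntegrable_const intervalIntegral.intervalIntegrable_id,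
    integral_id]
  norm_num




lemma volume_corner_E2 :
    volume {x : E2 | 0 ≤ x 0 ∧ 0 ≤ x 1 ∧ x 0 + x 1 ≤ 1} = ENNReal.ofReal (1/2) := by
  have h1 := EuclideanSpace.volume_preserving_symm_measurableEquiv_toLp (Fin 2)
  have h2 := volume_preserving_finTwoArrow ℝ
  have mp := h2.comp h1
  have hs : MeasurableSet {p : ℝ × ℝ | 0 ≤ p.1 ∧ 0 ≤ p.2 ∧ p.1 + p.2 ≤ 1} := by
    apply MeasurableSet.inter
    · exact measurableSet_le measurable_const measurable_fst
    apply MeasurableSet.inter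
    · exact measurableSet_le measurable_const measurable_snd
    · exact measurableSet_le (measurable_fst.add measurable_snd) measurable_const
  have hpre : {x : E2 | 0 ≤ x 0 ∧ 0 ≤ x 1 ∧ x 0 + x 1 ≤ 1}
      = (fun x : E2 => MeasurableEquiv.finTwoArrow ((MeasurableEquiv.toLp 2 (Fin 2 → ℝ)).symm x))
        ⁻¹' {p : ℝ × ℝ | 0 ≤ p.1 ∧ 0 ≤ p.2 ∧ p.1 + p.2 ≤ 1} := by
    ext x
    simp [MeasurableEquiv.finTwoArrow, MeasurableEquiv.coe_toLp_symm]
  rw [hpre]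
  rw [show (fun x : E2 => MeasurableEquiv.finTwoArrow ((MeasurableEquiv.toLp 2 (Fin 2 → ℝ)).symm x))
      = (⇑MeasurableEquiv.finTwoArrow ∘ ⇑((MeasurableEquiv.toLp 2 (Fin 2 → ℝ)).symm)) from rfl]
  rw [mp.measure_preimage hs.nullMeasurableSet, volume_corner_prod]

lemma corner_eq_hull :
    convexHull ℝ {(0:E2), EuclideanSpace.single 0 1, EuclideanSpace.single 1 1}
      = {x : E2 | 0 ≤ x 0 ∧ 0 ≤ x 1 ∧ x 0 + x 1 ≤ 1} := by
  apply le_antisymm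
  · apply convexHull_min
    · intro x hx
      simp only [mem_insert_iff, mem_singleton_iff] at hx
      rcases hx with h | h | h <;> subst h <;>
        simp [EuclideanSpace.single_apply]
    · intro x hx y hy t s ht hs hts
      simp only [mem_setOf_eq] at hx hy ⊢
      simp only [PiLp.add_apply, PiLp.smul_apply, smul_eq_mul]
      refine ⟨by nlinarith [hx.1, hy.1], by nlinarith [hx.2.1, hy.2.1], by nlinarith [hx.2.2, hy.2.2]⟩
  · intro x hx
    simp only [mem_setOf_eq] at hx
    have key : x = (1 - x 0 - x 1) • (0:E2) + (x 0 • EuclideanSpace.single 0 1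
        + x 1 • EuclideanSpace.single (1 : Fin 2) 1) := by
      ext i
      fin_cases i <;>
        simp [PiLp.add_apply, PiLp.smul_apply, EuclideanSpace.single_apply]
    have key2 : x = ∑ i : Fin 3, (![1 - x 0 - x 1, x 0, x 1]) i •
        (![(0:E2), EuclideanSpace.single 0 1, EuclideanSpace.single 1 1]) i := by
      rw [Fin.sum_univ_three]
      simpa using key
    rw [key2]
    apply (convex_convexHull ℝ _).sum_mem
    · intro i _
      fin_cases i <;> simp <;> linarith [hx.1, hx.2.1, hx.2.2]
    · rw [Fin.sum_univ_three]; simp; ring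
    · intro i _
      apply subset_convexHull
      fin_cases i <;> simp





/-- The linear map sending `e₀ ↦ u`, `e₁ ↦ v`. -/
def lmap (u v : E2) : E2 →ₗ[ℝ] E2 where
  toFun x := x 0 • u + x 1 • v
  map_add' x y := by
    simp only [PiLp.add_apply, add_smul]; abel
  map_smul' r x := by
    simp only [PiLp.smul_apply, smul_eq_mul, RingHom.id_apply, smul_add, ← smul_smul]

lemma lmap_det (u v : E2) : LinearMap.det (lmap u v) = u 0 * v 1 - v 0 * u 1 := by
  let B := (EuclideanSpace.basisFun (Fin 2) ℝ).toBasis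
  rw [← LinearMap.det_toMatrix B]
  rw [Matrix.det_fin_two]
  simp [LinearMap.toMatrix_apply, lmap, B, EuclideanSpace.basisFun_apply,
    EuclideanSpace.single_apply]

lemma vol_triangle (a b c : E2) :
    (volume (convexHull ℝ {a, b, c})).toReal
      = |(b 0 - a 0) * (c 1 - a 1) - (b 1 - a 1) * (c 0 - a 0)| / 2 := by
  set u := b - a with hu
  set v := c - a with hv
  have h1 : ({a, b, c} : Set E2) = a +ᵥ ({0, u, v} : Set E2) := by
    rw [← Set.image_vadd]
    rw [Set.image_insert_eq, Set.image_insert_eq, Set.image_singleton]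
    simp only [vadd_eq_add, add_zero, hu, hv]
    have hb : a + (b - a) = b := by abel
    have hc : a + (c - a) = c := by abel
    rw [hb, hc]
  have h2 : ({0, u, v} : Set E2)
      = (lmap u v) '' {(0:E2), EuclideanSpace.single 0 1, EuclideanSpace.single 1 1} := by
    rw [Set.image_insert_eq, Set.image_insert_eq, Set.image_singleton]
    have e0 : lmap u v 0 = 0 := map_zero _
    have e1 : lmap u v (EuclideanSpace.single 0 1) = u := by
      simp [lmap, EuclideanSpace.single_apply]
    have e2 : lmap u v (EuclideanSpace.single 1 1) = v := by
      simp [lmap, EuclideanSpace.single_apply]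
    rw [e0, e1, e2]
  rw [h1, convexHull_vadd, measure_vadd, h2, ← LinearMap.image_convexHull,
    Measure.addHaar_image_linearMap, corner_eq_hull, volume_corner_E2, lmap_det]
  rw [← ENNReal.ofReal_mul (abs_nonneg _), ENNReal.toReal_ofReal (by positivity)]
  have : u 0 * v 1 - v 0 * u 1 = (b 0 - a 0) * (c 1 - a 1) - (b 1 - a 1) * (c 0 - a 0) := by
    simp only [hu, hv, PiLp.sub_apply]; ring
  rw [this]; ring



def usq : Set E2 := {x : E2 | ∀ i, x i ∈ Set.Icc (0:ℝ) 1}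

lemma transfer (ψ : ℝ → ℝ → ℝ) (hψ : Continuous (fun p : ℝ × ℝ => ψ p.1 p.2)) :
    ∫ x in usq, ψ (x 0) (x 1)
      = ∫ s in (0:ℝ)..1, ∫ t in (0:ℝ)..1, ψ s t := by
  have h1 := EuclideanSpace.volume_preserving_symm_measurableEquiv_toLp (Fin 2)
  have h2 := volume_preserving_finTwoArrow ℝ
  set e : E2 ≃ᵐ ℝ × ℝ :=
    ((MeasurableEquiv.toLp 2 (Fin 2 → ℝ)).symm).trans MeasurableEquiv.finTwoArrow with he
  have mp : MeasurePreserving e volume volume := h2.comp h1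
  have hpre : usq = e ⁻¹' (Icc (0:ℝ) 1 ×ˢ Icc (0:ℝ) 1) := by
    ext x
    simp only [usq, mem_setOf_eq, mem_preimage, he, MeasurableEquiv.trans_apply,
      MeasurableEquiv.coe_toLp_symm, mem_prod]
    constructor
    · intro h
      exact ⟨h 0, h 1⟩
    · rintro ⟨h0, h1⟩ i
      fin_cases i
      · exact h0
      · exact h1
  have happ : ∀ x : E2, ψ (x 0) (x 1) = (fun p : ℝ × ℝ => ψ p.1 p.2) (e x) := fun x => rfl
  calc ∫ x in usq, ψ (x 0) (x 1)
      = ∫ x in e ⁻¹' (Icc (0:ℝ) 1 ×ˢ Icc (0:ℝ) 1), (fun p : ℝ × ℝ => ψ p.1 p.2) (e x) := by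
        rw [← hpre]; exact integral_congr_ae (Filter.Eventually.of_forall fun x => happ x)
    _ = ∫ p in (Icc (0:ℝ) 1 ×ˢ Icc (0:ℝ) 1), ψ p.1 p.2 := by
        exact mp.setIntegral_preimage_emb e.measurableEmbedding
          (fun p : ℝ × ℝ => ψ p.1 p.2) (Icc (0:ℝ) 1 ×ˢ Icc (0:ℝ) 1)
    _ = ∫ s in Icc (0:ℝ) 1, ∫ t in Icc (0:ℝ) 1, ψ s t := by
        rw [Measure.volume_eq_prod, setIntegral_prod]
        have : IntegrableOn (fun p : ℝ × ℝ => ψ p.1 p.2) (Icc (0:ℝ) 1 ×ˢ Icc (0:ℝ) 1) volume :=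
          hψ.continuousOn.integrableOn_compact (isCompact_Icc.prod isCompact_Icc)
        rwa [Measure.volume_eq_prod] at this
    _ = ∫ s in (0:ℝ)..1, ∫ t in (0:ℝ)..1, ψ s t := by
        rw [integral_Icc_eq_integral_Ioc, ← intervalIntegral.integral_of_le zero_le_one]
        congr 1
        funext s
        rw [integral_Icc_eq_integral_Ioc, ← intervalIntegral.integral_of_le zero_le_one]


lemma integrableOn_rect {f : ℝ → ℝ → ℝ} (hf : Continuous (uncurry f)) (a b c d : ℝ) :
    Integrable (uncurry f) ((volume.restrict (Ioc a b)).prod (volume.restrict (Ioc c d))) := by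
  rw [Measure.prod_restrict]
  have : IntegrableOn (uncurry f) (Icc a b ×ˢ Icc c d) (volume.prod volume) := by
    have : IntegrableOn (uncurry f) (Icc a b ×ˢ Icc c d) volume :=
      hf.continuousOn.integrableOn_compact (isCompact_Icc.prod isCompact_Icc)
    rwa [Measure.volume_eq_prod] at this
  exact this.mono_set (prod_mono Ioc_subset_Icc_self Ioc_subset_Icc_self)

lemma rswap {f : ℝ → ℝ → ℝ} (hf : Continuous (uncurry f)) {a b c d : ℝ}
    (hab : a ≤ b) (hcd : c ≤ d) :
    ∫ x in a..b, ∫ y in c..d, f x y = ∫ y in c..d, ∫ x in a..b, f x y := by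
  rw [intervalIntegral.integral_of_le hab, intervalIntegral.integral_of_le hcd]
  simp_rw [intervalIntegral.integral_of_le hcd, intervalIntegral.integral_of_le hab]
  exact integral_integral_swap (integrableOn_rect hf a b c d)

lemma tswap {f : ℝ → ℝ → ℝ} (hf : Continuous (uncurry f)) {a b : ℝ} (hab : a ≤ b) :
    ∫ x in a..b, ∫ y in a..x, f x y = ∫ y in a..b, ∫ x in y..b, f x y := by
  have hS : MeasurableSet {p : ℝ × ℝ | a < p.2 ∧ p.2 ≤ p.1} :=
    (measurableSet_lt measurable_const measurable_snd).inter
      (measurableSet_le measurable_snd measurable_fst)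
  have hFi : Integrable (fun p : ℝ × ℝ => ({q : ℝ × ℝ | a < q.2 ∧ q.2 ≤ q.1}.indicator
      (uncurry f)) p) ((volume.restrict (Ioc a b)).prod (volume.restrict (Ioc a b))) :=
    (integrableOn_rect hf a b a b).indicator hS
  calc ∫ x in a..b, ∫ y in a..x, f x y
      = ∫ x in Ioc a b, ∫ y in Ioc a b,
          ({q : ℝ × ℝ | a < q.2 ∧ q.2 ≤ q.1}.indicator (uncurry f)) (x, y) := by
        rw [intervalIntegral.integral_of_le hab]
        refine setIntegral_congr_fun measurableSet_Ioc (fun x hx => ?_)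
        have : ∫ y in Ioc a b, ({q : ℝ × ℝ | a < q.2 ∧ q.2 ≤ q.1}.indicator (uncurry f)) (x, y)
            = ∫ y in Ioc a b, (Ioc a x).indicator (f x) y := by
          refine setIntegral_congr_fun measurableSet_Ioc (fun y hy => ?_)
          simp [Set.indicator_apply, Set.mem_Ioc, uncurry, and_comm]
        rw [this, setIntegral_indicator measurableSet_Ioc, Set.Ioc_inter_Ioc, max_self,
          min_eq_right hx.2, intervalIntegral.integral_of_le hx.1.le]
    _ = ∫ y in Ioc a b, ∫ x in Ioc a b,
          ({q : ℝ × ℝ | a < q.2 ∧ q.2 ≤ q.1}.indicator (uncurry f)) (x, y) := by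
        exact integral_integral_swap hFi
    _ = ∫ y in a..b, ∫ x in y..b, f x y := by
        rw [intervalIntegral.integral_of_le hab]
        refine setIntegral_congr_fun measurableSet_Ioc (fun y hy => ?_)
        have : ∫ x in Ioc a b, ({q : ℝ × ℝ | a < q.2 ∧ q.2 ≤ q.1}.indicator (uncurry f)) (x, y)
            = ∫ x in Ioc a b, (Ici y).indicator (fun x => f x y) x := by
          refine setIntegral_congr_fun measurableSet_Ioc (fun x hx => ?_)
          simp only [Set.indicator_apply, Set.mem_setOf_eq, Set.mem_Ici, uncurry]
          by_cases h : y ≤ x <;> simp [h, hy.1]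
        rw [this, setIntegral_indicator measurableSet_Ici]
        have hset : Ioc a b ∩ Ici y = Icc y b := by
          ext x
          simp only [mem_inter_iff, mem_Ioc, mem_Ici, mem_Icc]
          constructor
          · rintro ⟨⟨_, h2⟩, h3⟩; exact ⟨h3, h2⟩
          · rintro ⟨h1, h2⟩; exact ⟨⟨lt_of_lt_of_le hy.1 h1, h2⟩, h1⟩
        rw [hset, integral_Icc_eq_integral_Ioc, intervalIntegral.integral_of_le hy.2]



def G3 (u v w : ℝ) : ℝ :=
  ∫ a in (0:ℝ)..1, ∫ b in (0:ℝ)..1, ∫ c in (0:ℝ)..1, |a*(v-w) + b*(w-u) + c*(u-v)|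

lemma contInt {X : Type*} [TopologicalSpace X] {f : X → ℝ → ℝ}
    (hf : Continuous (uncurry f)) : Continuous fun x => ∫ t in (0:ℝ)..1, f x t :=
  continuous_parametric_intervalIntegral_of_continuous' (μ := volume) hf 0 1

lemma cstack1 : Continuous fun p : ((ℝ×ℝ×ℝ)×ℝ)×ℝ =>
    ∫ c in (0:ℝ)..1,
      |p.1.2*(p.1.1.2.1 - p.1.1.2.2) + p.2*(p.1.1.2.2 - p.1.1.1) + c*(p.1.1.1 - p.1.1.2.1)| := by
  apply contInt (f := fun (q : ((ℝ×ℝ×ℝ)×ℝ)×ℝ) (c : ℝ) =>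
    |q.1.2*(q.1.1.2.1 - q.1.1.2.2) + q.2*(q.1.1.2.2 - q.1.1.1) + c*(q.1.1.1 - q.1.1.2.1)|)
  unfold uncurry; fun_prop

lemma cstack2 : Continuous fun p : (ℝ×ℝ×ℝ)×ℝ =>
    ∫ b in (0:ℝ)..1, ∫ c in (0:ℝ)..1,
      |p.2*(p.1.2.1 - p.1.2.2) + b*(p.1.2.2 - p.1.1) + c*(p.1.1 - p.1.2.1)| := by
  apply contInt (f := fun (q : (ℝ×ℝ×ℝ)×ℝ) (b : ℝ) => ∫ c in (0:ℝ)..1,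
    |q.2*(q.1.2.1 - q.1.2.2) + b*(q.1.2.2 - q.1.1) + c*(q.1.1 - q.1.2.1)|)
  exact cstack1

lemma contG3 : Continuous fun p : ℝ×ℝ×ℝ => G3 p.1 p.2.1 p.2.2 := by
  apply contInt (f := fun (q : ℝ×ℝ×ℝ) (a : ℝ) => ∫ b in (0:ℝ)..1, ∫ c in (0:ℝ)..1,
    |a*(q.2.1 - q.2.2) + b*(q.2.2 - q.1) + c*(q.1 - q.2.1)|)
  exact cstack2

lemma sym_vw (u v w : ℝ) : G3 u v w = G3 u w v := by
  unfold G3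
  refine intervalIntegral.integral_congr (fun a _ => ?_)
  refine Eq.trans (rswap (f := fun x y => |a*(v-w) + x*(w-u) + y*(u-v)|)
    (by unfold uncurry; fun_prop) zero_le_one zero_le_one) ?_
  refine intervalIntegral.integral_congr (fun b _ => ?_)
  refine intervalIntegral.integral_congr (fun c _ => ?_)
  rw [← abs_neg]
  ring_nf

lemma sym_uv (u v w : ℝ) : G3 u v w = G3 v u w := by
  unfold G3
  refine Eq.trans (rswap (f := fun x y => ∫ c in (0:ℝ)..1, |x*(v-w) + y*(w-u) + c*(u-v)|)
    ?_ zero_le_one zero_le_one) ?_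
  · have : Continuous fun p : ((ℝ×ℝ×ℝ)×ℝ)×ℝ =>
        ∫ c in (0:ℝ)..1,
          |p.1.2*(p.1.1.2.1 - p.1.1.2.2) + p.2*(p.1.1.2.2 - p.1.1.1) + c*(p.1.1.1 - p.1.1.2.1)| :=
      cstack1
    exact (this.comp (by fun_prop : Continuous fun q : ℝ×ℝ => (((u,v,w),q.1),q.2)))
  refine intervalIntegral.integral_congr (fun a _ => ?_)
  refine intervalIntegral.integral_congr (fun b _ => ?_)
  refine intervalIntegral.integral_congr (fun c _ => ?_)
  rw [← abs_neg]
  ring_nf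





/-- closed form of `G3` when `v ≤ w ≤ u`. -/
lemma K2 {u v w : ℝ} (h1 : v ≤ w) (h2 : w ≤ u) :
    G3 u v w = (((w-v)^2 + (u-w)^2)/3 + (w-v)*(u-w)/2) / (u-v) := by
  rcases eq_or_lt_of_le (le_trans h1 h2) with heq | hlt
  · have h3 : w = v := by linarith
    have h4 : u = v := by linarith
    subst h3; subst h4
    unfold G3
    simp
  · have hspos : 0 < u - v := sub_pos.2 hlt
    have hq0 : (0:ℝ) ≤ w - v := by linarith
    have hp0 : (0:ℝ) ≤ u - w := by linarith
    unfold G3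
    have inner : ∀ a ∈ Set.uIcc (0:ℝ) 1, ∀ b ∈ Set.uIcc (0:ℝ) 1,
        (∫ c in (0:ℝ)..1, |a*(v-w) + b*(w-u) + c*(u-v)|)
        = (((w-v)*a+(u-w)*b)^2 + ((u-v)-((w-v)*a+(u-w)*b))^2)/(2*(u-v)) := by
      intro a ha b hb
      rw [Set.uIcc_of_le zero_le_one] at ha hb
      have e : ∀ c : ℝ, |a*(v-w) + b*(w-u) + c*(u-v)| = |(u-v)*c - ((w-v)*a+(u-w)*b)| := by
        intro c; congr 1; ring
      rw [intervalIntegral.integral_congr (fun c _ => e c)]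
      have hb1 : (w-v)*a ≤ (w-v)*1 := mul_le_mul_of_nonneg_left ha.2 hq0
      have hb2 : (u-w)*b ≤ (u-w)*1 := mul_le_mul_of_nonneg_left hb.2 hp0
      have hb3 : (0:ℝ) ≤ (w-v)*a := mul_nonneg hq0 ha.1
      have hb4 : (0:ℝ) ≤ (u-w)*b := mul_nonneg hp0 hb.1
      rw [K1 hspos (by linarith) (by linarith)]
    have middle : ∀ a ∈ Set.uIcc (0:ℝ) 1,
        (∫ b in (0:ℝ)..1, ∫ c in (0:ℝ)..1, |a*(v-w) + b*(w-u) + c*(u-v)|)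
        = ((u-w)^2/(u-v))*(1^3-0^3)/3 + ((2*(w-v)*a*(u-w))/(u-v) - (u-w))*(1^2-0^2)/2
            + (((w-v)*a)^2/(u-v) - (w-v)*a + (u-v)/2)*(1-0) := by
      intro a ha
      have e1 : (∫ b in (0:ℝ)..1, ∫ c in (0:ℝ)..1, |a*(v-w) + b*(w-u) + c*(u-v)|)
          = ∫ b in (0:ℝ)..1, (((u-w)^2/(u-v))*b^2 + ((2*(w-v)*a*(u-w))/(u-v) - (u-w))*b
              + (((w-v)*a)^2/(u-v) - (w-v)*a + (u-v)/2)) := by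
        refine intervalIntegral.integral_congr (fun b hb => ?_)
        rw [inner a ha b hb]
        field_simp
        ring
      rw [e1, int_quad]
    have outer : (∫ a in (0:ℝ)..1, ∫ b in (0:ℝ)..1, ∫ c in (0:ℝ)..1,
        |a*(v-w) + b*(w-u) + c*(u-v)|)
        = ∫ a in (0:ℝ)..1, (((w-v)^2/(u-v))*a^2 + ((w-v)*(u-w)/(u-v) - (w-v))*a
            + ((u-w)^2/(3*(u-v)) - (u-w)/2 + (u-v)/2)) := by
      refine intervalIntegral.integral_congr (fun a ha => ?_)
      rw [middle a ha]
      field_simp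
      ring
    rw [outer, int_quad]
    field_simp
    ring

/-- the key middle-variable integral. -/
lemma midint {w v : ℝ} (h : w ≤ v) :
    ∫ u in w..v, ((((u-w)^2 + (v-u)^2)/3 + (u-w)*(v-u)/2) / (v-w)) = 11*(v-w)^2/36 := by
  rcases eq_or_lt_of_le h with heq | hlt
  · rw [← heq]; simp
  · have hne : v - w ≠ 0 := ne_of_gt (by linarith)
    have e : ∀ u ∈ Set.uIcc w v,
        ((((u-w)^2 + (v-u)^2)/3 + (u-w)*(v-u)/2) / (v-w))
        = (1/(6*(v-w)))*u^2 + (-(w+v)/(6*(v-w)))*u + ((w^2+v^2)/3 - w*v/2)/(v-w) := by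
      intro u _
      field_simp
      ring
    rw [intervalIntegral.integral_congr e, int_quad]
    field_simp
    ring












lemma tswap' {f : ℝ → ℝ → ℝ} (hf : Continuous (uncurry f)) {a b : ℝ} (hab : a ≤ b) :
    ∫ x in a..b, ∫ y in x..b, f x y = ∫ y in a..b, ∫ x in a..y, f x y := by
  have h := tswap (f := fun x y => f y x)
    (hf.comp (continuous_snd.prodMk continuous_fst)) hab
  exact h.symm

-- joint continuity helpers
set_option maxHeartbeats 1000000 in
@[fun_prop]
lemma contG3' {X : Type*} [TopologicalSpace X] {g1 g2 g3 : X → ℝ}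
    (h1 : Continuous g1) (h2 : Continuous g2) (h3 : Continuous g3) :
    Continuous fun x => G3 (g1 x) (g2 x) (g3 x) := by
  have h : Continuous fun x => ((g1 x, g2 x, g3 x) : ℝ×ℝ×ℝ) := h1.prodMk (h2.prodMk h3)
  exact contG3.comp h

lemma contA1 : Continuous fun p : ℝ×ℝ => ∫ w in (0:ℝ)..p.2, G3 p.1 p.2 w := by
  apply continuous_parametric_intervalIntegral_of_continuous (μ := volume)
    (f := fun (p : ℝ×ℝ) w => G3 p.1 p.2 w)
    (by apply contG3' <;> fun_prop) continuous_snd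

lemma contB1 : Continuous fun p : ℝ×ℝ => ∫ w in p.2..(1:ℝ), G3 p.1 p.2 w := by
  have h : Continuous fun p : ℝ×ℝ => ∫ w in (1:ℝ)..p.2, G3 p.1 p.2 w := by
    apply continuous_parametric_intervalIntegral_of_continuous (μ := volume)
      (f := fun (p : ℝ×ℝ) w => G3 p.1 p.2 w)
      (by apply contG3' <;> fun_prop) continuous_snd
  have e : ∀ p : ℝ×ℝ, (∫ w in p.2..(1:ℝ), G3 p.1 p.2 w)
      = -∫ w in (1:ℝ)..p.2, G3 p.1 p.2 w := fun p => intervalIntegral.integral_symm _ _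
  simp only [e]
  exact h.neg

lemma contD1 : Continuous fun p : ℝ×ℝ => ∫ w in (0:ℝ)..p.1, G3 p.1 p.2 w := by
  apply continuous_parametric_intervalIntegral_of_continuous (μ := volume)
    (f := fun (p : ℝ×ℝ) w => G3 p.1 p.2 w)
    (by apply contG3' <;> fun_prop) continuous_fst

lemma contE1 : Continuous fun p : ℝ×ℝ => ∫ w in p.1..p.2, G3 p.1 p.2 w := by
  have h : Continuous fun p : (ℝ×ℝ)×ℝ => ∫ w in (0:ℝ)..p.2, G3 p.1.1 p.1.2 w := by
    apply continuous_parametric_intervalIntegral_of_continuous (μ := volume)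
      (f := fun (p : (ℝ×ℝ)×ℝ) w => G3 p.1.1 p.1.2 w)
      (by apply contG3' <;> fun_prop) continuous_snd
  have h1 : Continuous fun p : ℝ×ℝ => ∫ w in (0:ℝ)..p.2, G3 p.1 p.2 w := contA1
  have h2 : Continuous fun p : ℝ×ℝ => ∫ w in (0:ℝ)..p.1, G3 p.1 p.2 w := contD1
  have e : ∀ p : ℝ×ℝ, (∫ w in p.1..p.2, G3 p.1 p.2 w)
      = (∫ w in (0:ℝ)..p.2, G3 p.1 p.2 w) - ∫ w in (0:ℝ)..p.1, G3 p.1 p.2 w := by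
    intro p
    rw [eq_sub_iff_add_eq]
    rw [add_comm]
    exact intervalIntegral.integral_add_adjacent_intervals
      ((contG3' continuous_const continuous_const continuous_id).intervalIntegrable _ _)
      ((contG3' continuous_const continuous_const continuous_id).intervalIntegrable _ _)
  simp only [e]
  exact h1.sub h2

lemma contPHI : Continuous fun p : ℝ×ℝ => ∫ v in p.1..(1:ℝ), G3 p.1 v p.2 := by
  have h : Continuous fun p : ℝ×ℝ => ∫ v in (1:ℝ)..p.1, G3 p.1 v p.2 := by
    apply continuous_parametric_intervalIntegral_of_continuous (μ := volume)
      (f := fun (p : ℝ×ℝ) v => G3 p.1 v p.2)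
      (by apply contG3' <;> fun_prop) continuous_fst
  have e : ∀ p : ℝ×ℝ, (∫ v in p.1..(1:ℝ), G3 p.1 v p.2)
      = -∫ v in (1:ℝ)..p.1, G3 p.1 v p.2 := fun p => intervalIntegral.integral_symm _ _
  simp only [e]
  exact h.neg

lemma Tval : (∫ u in (0:ℝ)..1, ∫ v in (0:ℝ)..1, ∫ w in (0:ℝ)..1, G3 u v w) = 11/72 := by
  -- Step 1: reduce to twice the integral over w ≤ v
  have key1 : ∀ u : ℝ, (∫ v in (0:ℝ)..1, ∫ w in (0:ℝ)..1, G3 u v w)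
      = 2*(∫ v in (0:ℝ)..1, ∫ w in (0:ℝ)..v, G3 u v w) := by
    intro u
    have hsplit : (∫ v in (0:ℝ)..1, ∫ w in (0:ℝ)..1, G3 u v w)
        = ∫ v in (0:ℝ)..1,
            ((∫ w in (0:ℝ)..v, G3 u v w) + (∫ w in v..(1:ℝ), G3 u v w)) := by
      refine intervalIntegral.integral_congr (fun v _ => ?_)
      exact (intervalIntegral.integral_add_adjacent_intervals
        ((contG3' continuous_const continuous_const continuous_id).intervalIntegrable _ _)
        ((contG3' continuous_const continuous_const continuous_id).intervalIntegrable _ _)).symm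
    have hIA : IntervalIntegrable (fun v => ∫ w in (0:ℝ)..v, G3 u v w) volume 0 1 :=
      (contA1.comp (continuous_const.prodMk continuous_id)).intervalIntegrable _ _
    have hIB : IntervalIntegrable (fun v => ∫ w in v..(1:ℝ), G3 u v w) volume 0 1 :=
      (contB1.comp (continuous_const.prodMk continuous_id)).intervalIntegrable _ _
    rw [hsplit, intervalIntegral.integral_add hIA hIB]
    have e2 : (∫ v in (0:ℝ)..1, ∫ w in v..(1:ℝ), G3 u v w)
        = ∫ v in (0:ℝ)..1, ∫ w in (0:ℝ)..v, G3 u v w := by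
      have p1 : (∫ v in (0:ℝ)..1, ∫ w in v..(1:ℝ), G3 u v w)
          = ∫ v in (0:ℝ)..1, ∫ w in v..(1:ℝ), G3 u w v := by
        refine intervalIntegral.integral_congr (fun v _ => ?_)
        exact intervalIntegral.integral_congr (fun w _ => sym_vw u v w)
      rw [p1]
      refine Eq.trans (tswap' (f := fun v w => G3 u w v)
        (contG3' (by fun_prop) (by fun_prop) (by fun_prop)) zero_le_one) ?_
      rfl
    rw [e2]; ring
  have hcongr1 : (∫ u in (0:ℝ)..1, ∫ v in (0:ℝ)..1, ∫ w in (0:ℝ)..1, G3 u v w)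
      = ∫ u in (0:ℝ)..1, 2*(∫ v in (0:ℝ)..1, ∫ w in (0:ℝ)..v, G3 u v w) :=
    intervalIntegral.integral_congr (fun u _ => key1 u)
  rw [hcongr1, intervalIntegral.integral_const_mul]
  -- Step 2: split the v integral at u
  have key2 : ∀ u ∈ Set.uIcc (0:ℝ) 1, (∫ v in (0:ℝ)..1, ∫ w in (0:ℝ)..v, G3 u v w)
      = (∫ v in (0:ℝ)..u, ∫ w in (0:ℝ)..v, G3 u v w)
        + ((∫ v in u..(1:ℝ), ∫ w in (0:ℝ)..u, G3 u v w)
          + (∫ v in u..(1:ℝ), ∫ w in u..v, G3 u v w)) := by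
    intro u hu
    have hsplitv : (∫ v in (0:ℝ)..1, ∫ w in (0:ℝ)..v, G3 u v w)
        = (∫ v in (0:ℝ)..u, ∫ w in (0:ℝ)..v, G3 u v w)
          + (∫ v in u..(1:ℝ), ∫ w in (0:ℝ)..v, G3 u v w) :=
      by
        have hIA1 : IntervalIntegrable (fun v => ∫ w in (0:ℝ)..v, G3 u v w) volume 0 u :=
          (contA1.comp (continuous_const.prodMk continuous_id)).intervalIntegrable _ _
        have hIA2 : IntervalIntegrable (fun v => ∫ w in (0:ℝ)..v, G3 u v w) volume u 1 :=
          (contA1.comp (continuous_const.prodMk continuous_id)).intervalIntegrable _ _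
        exact (intervalIntegral.integral_add_adjacent_intervals hIA1 hIA2).symm
    rw [hsplitv]
    congr 1
    have hsplitw : (∫ v in u..(1:ℝ), ∫ w in (0:ℝ)..v, G3 u v w)
        = ∫ v in u..(1:ℝ),
            ((∫ w in (0:ℝ)..u, G3 u v w) + (∫ w in u..v, G3 u v w)) := by
      refine intervalIntegral.integral_congr (fun v _ => ?_)
      exact (intervalIntegral.integral_add_adjacent_intervals
        ((contG3' continuous_const continuous_const continuous_id).intervalIntegrable _ _)
        ((contG3' continuous_const continuous_const continuous_id).intervalIntegrable _ _)).symm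
    have hID : IntervalIntegrable (fun v => ∫ w in (0:ℝ)..u, G3 u v w) volume u 1 :=
      (contD1.comp (continuous_const.prodMk continuous_id)).intervalIntegrable _ _
    have hIE : IntervalIntegrable (fun v => ∫ w in u..v, G3 u v w) volume u 1 :=
      (contE1.comp (continuous_const.prodMk continuous_id)).intervalIntegrable _ _
    rw [hsplitw, intervalIntegral.integral_add hID hIE]
  have hcongr2 : (∫ u in (0:ℝ)..1, ∫ v in (0:ℝ)..1, ∫ w in (0:ℝ)..v, G3 u v w)
      = ∫ u in (0:ℝ)..1,
          ((∫ v in (0:ℝ)..u, ∫ w in (0:ℝ)..v, G3 u v w)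
            + ((∫ v in u..(1:ℝ), ∫ w in (0:ℝ)..u, G3 u v w)
              + (∫ v in u..(1:ℝ), ∫ w in u..v, G3 u v w))) :=
    intervalIntegral.integral_congr (fun u hu => key2 u hu)
  rw [hcongr2]
  -- continuity of the three pieces in u
  have hC1cont : Continuous fun u => ∫ v in (0:ℝ)..u, ∫ w in (0:ℝ)..v, G3 u v w := by
    apply continuous_parametric_intervalIntegral_of_continuous (μ := volume)
      (f := fun (u : ℝ) v => ∫ w in (0:ℝ)..v, G3 u v w) (by exact contA1) continuous_id
  have hC2cont : Continuous fun u => ∫ v in u..(1:ℝ), ∫ w in (0:ℝ)..u, G3 u v w := by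
    have h : Continuous fun u => ∫ v in (1:ℝ)..u, ∫ w in (0:ℝ)..u, G3 u v w := by
      apply continuous_parametric_intervalIntegral_of_continuous (μ := volume)
        (f := fun (u : ℝ) v => ∫ w in (0:ℝ)..u, G3 u v w) (by exact contD1) continuous_id
    have e : ∀ u : ℝ, (∫ v in u..(1:ℝ), ∫ w in (0:ℝ)..u, G3 u v w)
        = -∫ v in (1:ℝ)..u, ∫ w in (0:ℝ)..u, G3 u v w :=
      fun u => intervalIntegral.integral_symm _ _
    simp only [e]
    exact h.neg
  have hC3cont : Continuous fun u => ∫ v in u..(1:ℝ), ∫ w in u..v, G3 u v w := by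
    have h : Continuous fun u => ∫ v in (1:ℝ)..u, ∫ w in u..v, G3 u v w := by
      apply continuous_parametric_intervalIntegral_of_continuous (μ := volume)
        (f := fun (u : ℝ) v => ∫ w in u..v, G3 u v w) (by exact contE1) continuous_id
    have e : ∀ u : ℝ, (∫ v in u..(1:ℝ), ∫ w in u..v, G3 u v w)
        = -∫ v in (1:ℝ)..u, ∫ w in u..v, G3 u v w :=
      fun u => intervalIntegral.integral_symm _ _
    simp only [e]
    exact h.neg
  rw [intervalIntegral.integral_add (g := fun u => (∫ v in u..(1:ℝ), ∫ w in (0:ℝ)..u, G3 u v w)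
      + ∫ v in u..(1:ℝ), ∫ w in u..v, G3 u v w) (hC1cont.intervalIntegrable _ _)
    ((hC2cont.add hC3cont).intervalIntegrable _ _),
    intervalIntegral.integral_add (hC2cont.intervalIntegrable _ _)
    (hC3cont.intervalIntegrable _ _)]
  -- evaluate piece 1
  have hval1 : ∀ u ∈ Set.uIcc (0:ℝ) 1,
      (∫ v in (0:ℝ)..u, ∫ w in (0:ℝ)..v, G3 u v w) = 11/108*u^3 := by
    intro u hu
    rw [Set.uIcc_of_le zero_le_one] at hu
    calc (∫ v in (0:ℝ)..u, ∫ w in (0:ℝ)..v, G3 u v w)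
        = ∫ w in (0:ℝ)..u, ∫ v in w..u, G3 u v w :=
          tswap (f := fun v w => G3 u v w) (by apply contG3' <;> fun_prop) hu.1
      _ = ∫ w in (0:ℝ)..u, (11*(u-w)^2/36) := by
          refine intervalIntegral.integral_congr (fun w hw => ?_)
          rw [Set.uIcc_of_le hu.1] at hw
          have e : (∫ v in w..u, G3 u v w)
              = ∫ v in w..u, ((((v-w)^2 + (u-v)^2)/3 + (v-w)*(u-v)/2) / (u-w)) := by
            refine intervalIntegral.integral_congr (fun v hv => ?_)
            rw [Set.uIcc_of_le hw.2] at hv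
            rw [sym_vw u v w]
            exact K2 hv.1 hv.2
          rw [e, midint hw.2]
      _ = ∫ w in (0:ℝ)..u, ((11/36)*w^2 + (-(11*u/18))*w + 11*u^2/36) :=
          intervalIntegral.integral_congr (fun w _ => by ring)
      _ = 11/108*u^3 := by rw [int_quad]; ring
  have heval1 : (∫ u in (0:ℝ)..1, ∫ v in (0:ℝ)..u, ∫ w in (0:ℝ)..v, G3 u v w)
      = 11/432 := by
    have e : (∫ u in (0:ℝ)..1, ∫ v in (0:ℝ)..u, ∫ w in (0:ℝ)..v, G3 u v w)
        = ∫ u in (0:ℝ)..1, ((11/108)*u^3 + 0*u^2 + 0*u + 0) := by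
      refine intervalIntegral.integral_congr (fun u hu => ?_)
      rw [hval1 u hu]; ring
    rw [e, int_cubic]; norm_num
  -- evaluate piece 3
  have hval3 : ∀ u ∈ Set.uIcc (0:ℝ) 1,
      (∫ v in u..(1:ℝ), ∫ w in u..v, G3 u v w)
        = -(11/108)*u^3 + (11/36)*u^2 + (-(11/36))*u + 11/108 := by
    intro u hu
    rw [Set.uIcc_of_le zero_le_one] at hu
    calc (∫ v in u..(1:ℝ), ∫ w in u..v, G3 u v w)
        = ∫ v in u..(1:ℝ), (11*(v-u)^2/36) := by
          refine intervalIntegral.integral_congr (fun v hv => ?_)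
          rw [Set.uIcc_of_le hu.2] at hv
          have e : (∫ w in u..v, G3 u v w)
              = ∫ w in u..v, ((((w-u)^2 + (v-w)^2)/3 + (w-u)*(v-w)/2) / (v-u)) := by
            refine intervalIntegral.integral_congr (fun w hw => ?_)
            rw [Set.uIcc_of_le hv.1] at hw
            rw [sym_uv u v w]
            exact K2 hw.1 hw.2
          rw [e, midint hv.1]
      _ = ∫ v in u..(1:ℝ), ((11/36)*v^2 + (-(11*u/18))*v + 11*u^2/36) :=
          intervalIntegral.integral_congr (fun v _ => by ring)
      _ = -(11/108)*u^3 + (11/36)*u^2 + (-(11/36))*u + 11/108 := by rw [int_quad]; ring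
  have heval3 : (∫ u in (0:ℝ)..1, ∫ v in u..(1:ℝ), ∫ w in u..v, G3 u v w)
      = 11/432 := by
    have e : (∫ u in (0:ℝ)..1, ∫ v in u..(1:ℝ), ∫ w in u..v, G3 u v w)
        = ∫ u in (0:ℝ)..1, (-(11/108)*u^3 + (11/36)*u^2 + (-(11/36))*u + 11/108) := by
      refine intervalIntegral.integral_congr (fun u hu => ?_)
      rw [hval3 u hu]
    rw [e, int_cubic]; norm_num
  -- evaluate piece 2
  have heval2 : (∫ u in (0:ℝ)..1, ∫ v in u..(1:ℝ), ∫ w in (0:ℝ)..u, G3 u v w)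
      = 11/432 := by
    have e1 : (∫ u in (0:ℝ)..1, ∫ v in u..(1:ℝ), ∫ w in (0:ℝ)..u, G3 u v w)
        = ∫ u in (0:ℝ)..1, ∫ w in (0:ℝ)..u, ∫ v in u..(1:ℝ), G3 u v w := by
      refine intervalIntegral.integral_congr (fun u hu => ?_)
      rw [Set.uIcc_of_le zero_le_one] at hu
      exact rswap (f := fun v w => G3 u v w) (by apply contG3' <;> fun_prop) hu.2 hu.1
    rw [e1]
    refine Eq.trans (tswap (f := fun u w => ∫ v in u..(1:ℝ), G3 u v w)
      (by exact contPHI) zero_le_one) ?_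
    have e2 : ∀ w ∈ Set.uIcc (0:ℝ) 1,
        (∫ u in w..(1:ℝ), ∫ v in u..(1:ℝ), G3 u v w)
          = -(11/108)*w^3 + (11/36)*w^2 + (-(11/36))*w + 11/108 := by
      intro w hw
      rw [Set.uIcc_of_le zero_le_one] at hw
      calc (∫ u in w..(1:ℝ), ∫ v in u..(1:ℝ), G3 u v w)
          = ∫ v in w..(1:ℝ), ∫ u in w..v, G3 u v w :=
            tswap' (f := fun u v => G3 u v w) (by apply contG3' <;> fun_prop) hw.2
        _ = ∫ v in w..(1:ℝ), (11*(v-w)^2/36) := by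
            refine intervalIntegral.integral_congr (fun v hv => ?_)
            rw [Set.uIcc_of_le hw.2] at hv
            have e : (∫ u in w..v, G3 u v w)
                = ∫ u in w..v, ((((u-w)^2 + (v-u)^2)/3 + (u-w)*(v-u)/2) / (v-w)) := by
              refine intervalIntegral.integral_congr (fun x hx => ?_)
              rw [Set.uIcc_of_le hv.1] at hx
              rw [sym_uv x v w, sym_vw v x w]
              exact K2 hx.1 hx.2
            rw [e, midint hv.1]
        _ = ∫ v in w..(1:ℝ), ((11/36)*v^2 + (-(11*w/18))*v + 11*w^2/36) :=
            intervalIntegral.integral_congr (fun v _ => by ring)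
        _ = -(11/108)*w^3 + (11/36)*w^2 + (-(11/36))*w + 11/108 := by rw [int_quad]; ring
    have e3 : (∫ w in (0:ℝ)..1, ∫ u in w..(1:ℝ), ∫ v in u..(1:ℝ), G3 u v w)
        = ∫ w in (0:ℝ)..1, (-(11/108)*w^3 + (11/36)*w^2 + (-(11/36))*w + 11/108) :=
      intervalIntegral.integral_congr (fun w hw => e2 w hw)
    rw [e3, int_cubic]; norm_num
  rw [heval1, heval2, heval3]
  norm_num






lemma I6val :
    (∫ x0 in (0:ℝ)..1, ∫ y0 in (0:ℝ)..1, ∫ x1 in (0:ℝ)..1, ∫ y1 in (0:ℝ)..1,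
      ∫ x2 in (0:ℝ)..1, ∫ y2 in (0:ℝ)..1,
        |(x1-x0)*(y2-y0) - (y1-y0)*(x2-x0)|) = 11/72 := by
  -- swap1 @1 : (x0,y0)
  have s1 : (∫ x0 in (0:ℝ)..1, ∫ y0 in (0:ℝ)..1, ∫ x1 in (0:ℝ)..1, ∫ y1 in (0:ℝ)..1,
      ∫ x2 in (0:ℝ)..1, ∫ y2 in (0:ℝ)..1, |(x1-x0)*(y2-y0) - (y1-y0)*(x2-x0)|)
      = ∫ y0 in (0:ℝ)..1, ∫ x0 in (0:ℝ)..1, ∫ x1 in (0:ℝ)..1, ∫ y1 in (0:ℝ)..1,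
      ∫ x2 in (0:ℝ)..1, ∫ y2 in (0:ℝ)..1, |(x1-x0)*(y2-y0) - (y1-y0)*(x2-x0)| := by
    refine rswap (f := fun x0 y0 => ∫ x1 in (0:ℝ)..1, ∫ y1 in (0:ℝ)..1,
      ∫ x2 in (0:ℝ)..1, ∫ y2 in (0:ℝ)..1, |(x1-x0)*(y2-y0) - (y1-y0)*(x2-x0)|)
      ?_ zero_le_one zero_le_one
    unfold uncurry
    repeat (apply contInt; unfold uncurry)
    fun_prop
  rw [s1]
  -- swap2 @3 : (x1,y1)
  have s2 : ∀ y0 x0 : ℝ, (∫ x1 in (0:ℝ)..1, ∫ y1 in (0:ℝ)..1,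
      ∫ x2 in (0:ℝ)..1, ∫ y2 in (0:ℝ)..1, |(x1-x0)*(y2-y0) - (y1-y0)*(x2-x0)|)
      = ∫ y1 in (0:ℝ)..1, ∫ x1 in (0:ℝ)..1,
      ∫ x2 in (0:ℝ)..1, ∫ y2 in (0:ℝ)..1, |(x1-x0)*(y2-y0) - (y1-y0)*(x2-x0)| := by
    intro y0 x0
    refine rswap (f := fun x1 y1 => ∫ x2 in (0:ℝ)..1, ∫ y2 in (0:ℝ)..1,
      |(x1-x0)*(y2-y0) - (y1-y0)*(x2-x0)|) ?_ zero_le_one zero_le_one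
    unfold uncurry
    repeat (apply contInt; unfold uncurry)
    fun_prop
  rw [intervalIntegral.integral_congr (fun y0 _ =>
    intervalIntegral.integral_congr (fun x0 _ => s2 y0 x0))]
  -- swap3 @2 : (x0,y1)
  have s3 : ∀ y0 : ℝ, (∫ x0 in (0:ℝ)..1, ∫ y1 in (0:ℝ)..1, ∫ x1 in (0:ℝ)..1,
      ∫ x2 in (0:ℝ)..1, ∫ y2 in (0:ℝ)..1, |(x1-x0)*(y2-y0) - (y1-y0)*(x2-x0)|)
      = ∫ y1 in (0:ℝ)..1, ∫ x0 in (0:ℝ)..1, ∫ x1 in (0:ℝ)..1,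
      ∫ x2 in (0:ℝ)..1, ∫ y2 in (0:ℝ)..1, |(x1-x0)*(y2-y0) - (y1-y0)*(x2-x0)| := by
    intro y0
    refine rswap (f := fun x0 y1 => ∫ x1 in (0:ℝ)..1,
      ∫ x2 in (0:ℝ)..1, ∫ y2 in (0:ℝ)..1, |(x1-x0)*(y2-y0) - (y1-y0)*(x2-x0)|)
      ?_ zero_le_one zero_le_one
    unfold uncurry
    repeat (apply contInt; unfold uncurry)
    fun_prop
  rw [intervalIntegral.integral_congr (fun y0 _ => s3 y0)]
  -- swap4 @5 : (x2,y2)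
  have s4 : ∀ y0 y1 x0 x1 : ℝ, (∫ x2 in (0:ℝ)..1, ∫ y2 in (0:ℝ)..1,
      |(x1-x0)*(y2-y0) - (y1-y0)*(x2-x0)|)
      = ∫ y2 in (0:ℝ)..1, ∫ x2 in (0:ℝ)..1, |(x1-x0)*(y2-y0) - (y1-y0)*(x2-x0)| := by
    intro y0 y1 x0 x1
    refine rswap (f := fun x2 y2 => |(x1-x0)*(y2-y0) - (y1-y0)*(x2-x0)|)
      ?_ zero_le_one zero_le_one
    unfold uncurry; fun_prop
  rw [intervalIntegral.integral_congr (fun y0 _ =>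
    intervalIntegral.integral_congr (fun y1 _ =>
      intervalIntegral.integral_congr (fun x0 _ =>
        intervalIntegral.integral_congr (fun x1 _ => s4 y0 y1 x0 x1))))]
  -- swap5 @4 : (x1,y2)
  have s5 : ∀ y0 y1 x0 : ℝ, (∫ x1 in (0:ℝ)..1, ∫ y2 in (0:ℝ)..1,
      ∫ x2 in (0:ℝ)..1, |(x1-x0)*(y2-y0) - (y1-y0)*(x2-x0)|)
      = ∫ y2 in (0:ℝ)..1, ∫ x1 in (0:ℝ)..1,
        ∫ x2 in (0:ℝ)..1, |(x1-x0)*(y2-y0) - (y1-y0)*(x2-x0)| := by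
    intro y0 y1 x0
    refine rswap (f := fun x1 y2 => ∫ x2 in (0:ℝ)..1,
      |(x1-x0)*(y2-y0) - (y1-y0)*(x2-x0)|) ?_ zero_le_one zero_le_one
    unfold uncurry
    repeat (apply contInt; unfold uncurry)
    fun_prop
  rw [intervalIntegral.integral_congr (fun y0 _ =>
    intervalIntegral.integral_congr (fun y1 _ =>
      intervalIntegral.integral_congr (fun x0 _ => s5 y0 y1 x0)))]
  -- swap6 @3 : (x0,y2)
  have s6 : ∀ y0 y1 : ℝ, (∫ x0 in (0:ℝ)..1, ∫ y2 in (0:ℝ)..1, ∫ x1 in (0:ℝ)..1,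
      ∫ x2 in (0:ℝ)..1, |(x1-x0)*(y2-y0) - (y1-y0)*(x2-x0)|)
      = ∫ y2 in (0:ℝ)..1, ∫ x0 in (0:ℝ)..1, ∫ x1 in (0:ℝ)..1,
        ∫ x2 in (0:ℝ)..1, |(x1-x0)*(y2-y0) - (y1-y0)*(x2-x0)| := by
    intro y0 y1
    refine rswap (f := fun x0 y2 => ∫ x1 in (0:ℝ)..1,
      ∫ x2 in (0:ℝ)..1, |(x1-x0)*(y2-y0) - (y1-y0)*(x2-x0)|) ?_ zero_le_one zero_le_one
    unfold uncurry
    repeat (apply contInt; unfold uncurry)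
    fun_prop
  rw [intervalIntegral.integral_congr (fun y0 _ =>
    intervalIntegral.integral_congr (fun y1 _ => s6 y0 y1))]
  -- inner triple equals G3
  have hG : ∀ y0 y1 y2 : ℝ, (∫ x0 in (0:ℝ)..1, ∫ x1 in (0:ℝ)..1,
      ∫ x2 in (0:ℝ)..1, |(x1-x0)*(y2-y0) - (y1-y0)*(x2-x0)|) = G3 y0 y1 y2 := by
    intro y0 y1 y2
    unfold G3
    refine intervalIntegral.integral_congr (fun x0 _ => ?_)
    refine intervalIntegral.integral_congr (fun x1 _ => ?_)
    refine intervalIntegral.integral_congr (fun x2 _ => ?_)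
    congr 1
    ring
  rw [intervalIntegral.integral_congr (fun y0 _ =>
    intervalIntegral.integral_congr (fun y1 _ =>
      intervalIntegral.integral_congr (fun y2 _ => hG y0 y1 y2)))]
  exact Tval








/-- The expected area of a random triangle with i.i.d. uniform vertices in the unit square
equals `11/144`. -/
theorem stmt_5 :
    (∫ x₀ in {x : EuclideanSpace ℝ (Fin 2) | ∀ i, x i ∈ Set.Icc (0:ℝ) 1},
        ∫ x₁ in {x : EuclideanSpace ℝ (Fin 2) | ∀ i, x i ∈ Set.Icc (0:ℝ) 1},
          ∫ x₂ in {x : EuclideanSpace ℝ (Fin 2) | ∀ i, x i ∈ Set.Icc (0:ℝ) 1},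
            (volume (convexHull ℝ {x₀, x₁, x₂})).toReal)
      = 11 / 144 := by
  show (∫ x₀ in usq, ∫ x₁ in usq, ∫ x₂ in usq,
      (volume (convexHull ℝ {x₀, x₁, x₂})).toReal) = 11 / 144
  have stepA : ∀ x0 x1 : E2, (∫ x2 in usq, (volume (convexHull ℝ {x0, x1, x2})).toReal)
      = ∫ s in (0:ℝ)..1, ∫ t in (0:ℝ)..1,
          |(x1 0 - x0 0)*(t - x0 1) - (x1 1 - x0 1)*(s - x0 0)|/2 := by
    intro x0 x1
    have e : ∀ x2 : E2, (volume (convexHull ℝ {x0, x1, x2})).toReal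
        = |(x1 0 - x0 0)*(x2 1 - x0 1) - (x1 1 - x0 1)*(x2 0 - x0 0)|/2 :=
      fun x2 => vol_triangle x0 x1 x2
    rw [integral_congr_ae (Filter.Eventually.of_forall e)]
    exact transfer (fun s t => |(x1 0 - x0 0)*(t - x0 1) - (x1 1 - x0 1)*(s - x0 0)|/2)
      (by fun_prop)
  have stepB : ∀ x0 : E2, (∫ x1 in usq, ∫ x2 in usq,
      (volume (convexHull ℝ {x0, x1, x2})).toReal)
      = ∫ c in (0:ℝ)..1, ∫ d in (0:ℝ)..1, ∫ s in (0:ℝ)..1, ∫ t in (0:ℝ)..1,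
          |(c - x0 0)*(t - x0 1) - (d - x0 1)*(s - x0 0)|/2 := by
    intro x0
    rw [integral_congr_ae (Filter.Eventually.of_forall (stepA x0))]
    exact transfer (fun c d => ∫ s in (0:ℝ)..1, ∫ t in (0:ℝ)..1,
      |(c - x0 0)*(t - x0 1) - (d - x0 1)*(s - x0 0)|/2)
      (by apply contInt; unfold uncurry; repeat (apply contInt; unfold uncurry); fun_prop)
  rw [integral_congr_ae (Filter.Eventually.of_forall stepB)]
  rw [transfer (fun a b => ∫ c in (0:ℝ)..1, ∫ d in (0:ℝ)..1, ∫ s in (0:ℝ)..1,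
      ∫ t in (0:ℝ)..1, |(c - a)*(t - b) - (d - b)*(s - a)|/2)
    (by apply contInt; unfold uncurry; repeat (apply contInt; unfold uncurry); fun_prop)]
  simp only [intervalIntegral.integral_div]
  rw [I6val]
  norm_num
end
end

section
/- The second moment of the area of a random triangle in a unit-area triangle equals 1/72, and in the unit square equals 1/96. -/
open MeasureTheory Set

noncomputable section

def Tri : Set (ℝ × ℝ) := {p | 0 ≤ p.1 ∧ 0 ≤ p.2 ∧ p.1 + p.2 ≤ 1}

def Sq : Set (ℝ × ℝ) := Set.Icc 0 1 ×ˢ Set.Icc 0 1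

lemma int_cubic_s6 (A B C D t : ℝ) :
    ∫ x in (0:ℝ)..t, (A + B*x + C*x^2 + D*x^3) = A*t + B/2*t^2 + C/3*t^3 + D/4*t^4 := by
  have key : ∀ y : ℝ, HasDerivAt (fun x => A*x + B/2*x^2 + C/3*x^3 + D/4*x^4)
      (A + B*y + C*y^2 + D*y^3) y := by
    intro y
    have h : HasDerivAt (fun x : ℝ => A*x + B/2*x^2 + C/3*x^3 + D/4*x^4)
        (A*1 + B/2*(↑2*y^1) + C/3*(↑3*y^2) + D/4*(↑4*y^3)) y := by
      exact ((((hasDerivAt_id y).const_mul A).add ((hasDerivAt_pow 2 y).const_mul (B/2))).add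
        ((hasDerivAt_pow 3 y).const_mul (C/3))).add ((hasDerivAt_pow 4 y).const_mul (D/4))
    convert h using 1
    ring
  rw [intervalIntegral.integral_eq_sub_of_hasDerivAt (fun y _ => key y)
    (by apply Continuous.intervalIntegrable; fun_prop)]
  ring

lemma isCompact_Tri : IsCompact Tri := by
  have h1 : IsClosed Tri := by
    have : Tri = {p : ℝ × ℝ | 0 ≤ p.1} ∩ ({p | 0 ≤ p.2} ∩ {p | p.1 + p.2 ≤ 1}) := rfl
    rw [this]
    exact (isClosed_le continuous_const continuous_fst).inter
      ((isClosed_le continuous_const continuous_snd).inter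
        (isClosed_le (continuous_fst.add continuous_snd) continuous_const))
  exact (isCompact_Icc (a := ((0:ℝ),(0:ℝ))) (b := (1,1))).of_isClosed_subset h1
    (fun p hp => by
      obtain ⟨h1, h2, h3⟩ := hp
      exact ⟨⟨h1, h2⟩, ⟨by dsimp; linarith, by dsimp; linarith⟩⟩)

lemma measurableSet_Tri : MeasurableSet Tri := isCompact_Tri.isClosed.measurableSet

lemma tri_int (c00 c10 c01 c20 c11 c02 : ℝ) :
    ∫ p in Tri, (c00 + c10*p.1 + c01*p.2 + c20*p.1^2 + c11*p.1*p.2 + c02*p.2^2)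
      = c00/2 + c10/6 + c01/6 + c20/12 + c11/24 + c02/12 := by
  set g : ℝ × ℝ → ℝ := fun p => c00 + c10*p.1 + c01*p.2 + c20*p.1^2 + c11*p.1*p.2 + c02*p.2^2
    with hg
  have hgc : Continuous g := by fun_prop
  have hint : IntegrableOn g Tri volume :=
    hgc.continuousOn.integrableOn_compact isCompact_Tri
  rw [← integral_indicator measurableSet_Tri]
  have hprod : (volume : Measure (ℝ × ℝ)) = (volume : Measure ℝ).prod volume := Measure.volume_eq_prod ℝ ℝ
  rw [hprod, integral_prod]
  swap
  · rw [← hprod]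
    exact (integrable_indicator_iff measurableSet_Tri).2 hint
  have inner : ∀ u : ℝ, (∫ v, Tri.indicator g (u, v))
      = (Set.Icc (0:ℝ) 1).indicator (fun u => ∫ v in (0:ℝ)..(1-u), g (u, v)) u := by
    intro u
    by_cases hu : u ∈ Set.Icc (0:ℝ) 1
    · have hiff : ∀ v : ℝ, ((u, v) ∈ Tri) ↔ v ∈ Set.Icc 0 (1 - u) := by
        intro v
        simp only [Tri, Set.mem_setOf_eq, Set.mem_Icc]
        constructor
        · rintro ⟨_, h2, h3⟩; exact ⟨h2, by linarith⟩
        · rintro ⟨h2, h3⟩; exact ⟨hu.1, h2, by linarith⟩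
      have heq : (fun v => Tri.indicator g (u, v))
          = (Set.Icc 0 (1-u)).indicator (fun v => g (u, v)) := by
        funext v
        by_cases hv : v ∈ Set.Icc 0 (1-u)
        · rw [Set.indicator_of_mem ((hiff v).2 hv), Set.indicator_of_mem hv]
        · rw [Set.indicator_of_notMem (fun h => hv ((hiff v).1 h)),
            Set.indicator_of_notMem hv]
      rw [heq, integral_indicator measurableSet_Icc, Set.indicator_of_mem hu,
        integral_Icc_eq_integral_Ioc, ← intervalIntegral.integral_of_le (by linarith [hu.2])]
    · have heq : (fun v => Tri.indicator g (u, v)) = fun _ => (0:ℝ) := by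
        funext v
        apply Set.indicator_of_notMem
        rintro ⟨h1, h2, h3⟩
        exact hu ⟨h1, by linarith⟩
      rw [heq, integral_zero, Set.indicator_of_notMem hu]
  rw [integral_congr_ae (Filter.Eventually.of_forall inner),
    integral_indicator measurableSet_Icc, integral_Icc_eq_integral_Ioc,
    ← intervalIntegral.integral_of_le (by norm_num : (0:ℝ) ≤ 1)]
  have hval : ∀ u : ℝ, (∫ v in (0:ℝ)..(1-u), g (u, v))
      = (c00 + c10*u + c20*u^2)*(1-u) + (c01 + c11*u)/2*(1-u)^2 + c02/3*(1-u)^3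
        + (0:ℝ)/4*(1-u)^4 := by
    intro u
    rw [show (fun v => g (u, v)) = fun v => (c00 + c10*u + c20*u^2) + (c01 + c11*u)*v
        + c02*v^2 + (0:ℝ)*v^3 from funext fun v => by simp only [hg]; ring]
    exact int_cubic_s6 _ _ _ _ _
  rw [intervalIntegral.integral_congr (fun u _ => hval u)]
  rw [show (fun u : ℝ => (c00 + c10*u + c20*u^2)*(1-u) + (c01 + c11*u)/2*(1-u)^2
      + c02/3*(1-u)^3 + (0:ℝ)/4*(1-u)^4)
    = fun u : ℝ => (c00 + c01/2 + c02/3) + (-c00 - c01 - c02 + c10 + c11/2)*u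
      + (c01/2 + c02 - c10 - c11 + c20)*u^2 + (-c02/3 + c11/2 - c20)*u^3
    from funext fun u => by ring]
  rw [int_cubic_s6]
  ring


lemma sq_int (c00 c10 c01 c20 c11 c02 : ℝ) :
    ∫ p in Sq, (c00 + c10*p.1 + c01*p.2 + c20*p.1^2 + c11*p.1*p.2 + c02*p.2^2)
      = c00 + c10/2 + c01/2 + c20/3 + c11/4 + c02/3 := by
  set g : ℝ × ℝ → ℝ := fun p => c00 + c10*p.1 + c01*p.2 + c20*p.1^2 + c11*p.1*p.2 + c02*p.2^2
    with hg
  have hgc : Continuous g := by fun_prop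
  have hint : IntegrableOn g Sq volume :=
    hgc.continuousOn.integrableOn_compact (isCompact_Icc.prod isCompact_Icc)
  rw [Sq, Measure.volume_eq_prod ℝ ℝ] at hint ⊢
  rw [setIntegral_prod _ hint]
  have hval : ∀ u : ℝ, (∫ v in Set.Icc (0:ℝ) 1, g (u, v))
      = (c00 + c10*u + c20*u^2) + (c01 + c11*u)/2*1^2 + c02/3*1^3 + (0:ℝ)/4*1^4 := by
    intro u
    rw [integral_Icc_eq_integral_Ioc, ← intervalIntegral.integral_of_le (by norm_num : (0:ℝ) ≤ 1)]
    rw [show (fun v => g (u, v)) = fun v => (c00 + c10*u + c20*u^2) + (c01 + c11*u)*v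
        + c02*v^2 + (0:ℝ)*v^3 from funext fun v => by simp only [hg]; ring]
    have := int_cubic_s6 (c00 + c10*u + c20*u^2) (c01 + c11*u) c02 0 1
    rw [this]; ring
  rw [setIntegral_congr_fun measurableSet_Icc (fun u _ => hval u),
    integral_Icc_eq_integral_Ioc, ← intervalIntegral.integral_of_le (by norm_num : (0:ℝ) ≤ 1)]
  rw [show (fun u : ℝ => (c00 + c10*u + c20*u^2) + (c01 + c11*u)/2*1^2 + c02/3*1^3 + (0:ℝ)/4*1^4)
    = fun u : ℝ => (c00 + c01/2 + c02/3) + (c10 + c11/2)*u + c20*u^2 + (0:ℝ)*u^3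
    from funext fun u => by ring]
  rw [int_cubic_s6]
  ring

lemma volume_Tri : volume Tri = ENNReal.ofReal (1/2) := by
  rw [Measure.volume_eq_prod ℝ ℝ, Measure.prod_apply measurableSet_Tri]
  have hslice : ∀ u : ℝ, (volume (Prod.mk u ⁻¹' Tri))
      = (Set.Icc (0:ℝ) 1).indicator (fun u => ENNReal.ofReal (1 - u)) u := by
    intro u
    by_cases hu : u ∈ Set.Icc (0:ℝ) 1
    · have : Prod.mk u ⁻¹' Tri = Set.Icc 0 (1 - u) := by
        ext v
        simp only [Set.mem_preimage, Tri, Set.mem_setOf_eq, Set.mem_Icc]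
        constructor
        · rintro ⟨_, h2, h3⟩; exact ⟨h2, by linarith⟩
        · rintro ⟨h2, h3⟩; exact ⟨hu.1, h2, by linarith⟩
      rw [this, Real.volume_Icc, Set.indicator_of_mem hu]
      norm_num
    · have : Prod.mk u ⁻¹' Tri = ∅ := by
        ext v
        simp only [Set.mem_preimage, Tri, Set.mem_setOf_eq, Set.mem_empty_iff_false,
          iff_false]
        rintro ⟨h1, h2, h3⟩
        exact hu ⟨h1, by linarith⟩
      rw [this, measure_empty, Set.indicator_of_notMem hu]
  rw [lintegral_congr hslice, lintegral_indicator measurableSet_Icc]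
  rw [← ofReal_integral_eq_lintegral_ofReal]
  · congr 1
    rw [integral_Icc_eq_integral_Ioc, ← intervalIntegral.integral_of_le (by norm_num : (0:ℝ) ≤ 1)]
    rw [show (fun u : ℝ => 1 - u) = fun u : ℝ => (1:ℝ) + (-1)*u + (0:ℝ)*u^2 + (0:ℝ)*u^3
      from funext fun u => by ring]
    rw [int_cubic_s6]; norm_num
  · exact (Continuous.integrableOn_Icc (by fun_prop))
  · filter_upwards [self_mem_ae_restrict measurableSet_Icc] with u hu
    simp only [Pi.zero_apply]
    linarith [hu.2]

lemma tri_h2 (a b : ℝ × ℝ) :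
    (∫ p in Tri, ((b.1-a.1)*(p.2-a.2)-(p.1-a.1)*(b.2-a.2))^2/4)
      = (1/48)*b.2^2 + (-1/48)*b.1*b.2 + (1/48)*b.1^2 + (-1/24)*a.2*b.2 + (1/48)*a.2*b.1 + (1/12)*a.2*b.1*b.2 + (-1/12)*a.2*b.1^2 + (1/48)*a.2^2 + (-1/12)*a.2^2*b.1 + (1/8)*a.2^2*b.1^2 + (1/48)*a.1*b.2 + (-1/12)*a.1*b.2^2 + (-1/24)*a.1*b.1 + (1/12)*a.1*b.1*b.2 + (-1/48)*a.1*a.2 + (1/12)*a.1*a.2*b.2 + (1/12)*a.1*a.2*b.1 + (-1/4)*a.1*a.2*b.1*b.2 + (1/48)*a.1^2 + (-1/12)*a.1^2*b.2 + (1/8)*a.1^2*b.2^2 := by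
  rw [show (fun p : ℝ × ℝ => ((b.1-a.1)*(p.2-a.2)-(p.1-a.1)*(b.2-a.2))^2/4)
      = fun p => ((1/4)*a.2^2*b.1^2 + (-1/2)*a.1*a.2*b.1*b.2 + (1/4)*a.1^2*b.2^2) + ((1/2)*a.2*b.1*b.2 + (-1/2)*a.2^2*b.1 + (-1/2)*a.1*b.2^2 + (1/2)*a.1*a.2*b.2)*p.1 + ((-1/2)*a.2*b.1^2 + (1/2)*a.1*b.1*b.2 + (1/2)*a.1*a.2*b.1 + (-1/2)*a.1^2*b.2)*p.2 + ((1/4)*b.2^2 + (-1/2)*a.2*b.2 + (1/4)*a.2^2)*p.1^2 + ((-1/2)*b.1*b.2 + (1/2)*a.2*b.1 + (1/2)*a.1*b.2 + (-1/2)*a.1*a.2)*p.1*p.2 + ((1/4)*b.1^2 + (-1/2)*a.1*b.1 + (1/4)*a.1^2)*p.2^2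
    from funext fun p => by ring, tri_int]
  ring

lemma tri_h1 (a : ℝ × ℝ) :
    (∫ p in Tri, ((1/48)*p.2^2 + (-1/48)*p.1*p.2 + (1/48)*p.1^2 + (-1/24)*a.2*p.2 + (1/48)*a.2*p.1 + (1/12)*a.2*p.1*p.2 + (-1/12)*a.2*p.1^2 + (1/48)*a.2^2 + (-1/12)*a.2^2*p.1 + (1/8)*a.2^2*p.1^2 + (1/48)*a.1*p.2 + (-1/12)*a.1*p.2^2 + (-1/24)*a.1*p.1 + (1/12)*a.1*p.1*p.2 + (-1/48)*a.1*a.2 + (1/12)*a.1*a.2*p.2 + (1/12)*a.1*a.2*p.1 + (-1/4)*a.1*a.2*p.1*p.2 + (1/48)*a.1^2 + (-1/12)*a.1^2*p.2 + (1/8)*a.1^2*p.2^2))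
      = (1/384) + (-1/144)*a.2 + (1/144)*a.2^2 + (-1/144)*a.1 + (1/144)*a.1*a.2 + (1/144)*a.1^2 := by
  rw [show (fun p : ℝ × ℝ => ((1/48)*p.2^2 + (-1/48)*p.1*p.2 + (1/48)*p.1^2 + (-1/24)*a.2*p.2 + (1/48)*a.2*p.1 + (1/12)*a.2*p.1*p.2 + (-1/12)*a.2*p.1^2 + (1/48)*a.2^2 + (-1/12)*a.2^2*p.1 + (1/8)*a.2^2*p.1^2 + (1/48)*a.1*p.2 + (-1/12)*a.1*p.2^2 + (-1/24)*a.1*p.1 + (1/12)*a.1*p.1*p.2 + (-1/48)*a.1*a.2 + (1/12)*a.1*a.2*p.2 + (1/12)*a.1*a.2*p.1 + (-1/4)*a.1*a.2*p.1*p.2 + (1/48)*a.1^2 + (-1/12)*a.1^2*p.2 + (1/8)*a.1^2*p.2^2))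
      = fun p => ((1/48)*a.2^2 + (-1/48)*a.1*a.2 + (1/48)*a.1^2) + ((1/48)*a.2 + (-1/12)*a.2^2 + (-1/24)*a.1 + (1/12)*a.1*a.2)*p.1 + ((-1/24)*a.2 + (1/48)*a.1 + (1/12)*a.1*a.2 + (-1/12)*a.1^2)*p.2 + ((1/48) + (-1/12)*a.2 + (1/8)*a.2^2)*p.1^2 + ((-1/48) + (1/12)*a.2 + (1/12)*a.1 + (-1/4)*a.1*a.2)*p.1*p.2 + ((1/48) + (-1/12)*a.1 + (1/8)*a.1^2)*p.2^2
    from funext fun p => by ring, tri_int]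
  ring

lemma tri_core :
    (∫ p₀ in Tri, ∫ p₁ in Tri, ∫ p₂ in Tri,
        ((p₁.1-p₀.1)*(p₂.2-p₀.2)-(p₂.1-p₀.1)*(p₁.2-p₀.2))^2/4)
      = (1/2304) := by
  simp only [tri_h2, tri_h1]
  rw [show (fun p : ℝ × ℝ => ((1/384) + (-1/144)*p.2 + (1/144)*p.2^2 + (-1/144)*p.1 + (1/144)*p.1*p.2 + (1/144)*p.1^2))
      = fun p => ((1/384)) + ((-1/144))*p.1 + ((-1/144))*p.2 + ((1/144))*p.1^2 + ((1/144))*p.1*p.2 + ((1/144))*p.2^2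
    from funext fun p => by ring, tri_int]
  norm_num

lemma sq_h2 (a b : ℝ × ℝ) :
    (∫ p in Sq, ((b.1-a.1)*(p.2-a.2)-(p.1-a.1)*(b.2-a.2))^2/4)
      = (1/12)*b.2^2 + (-1/8)*b.1*b.2 + (1/12)*b.1^2 + (-1/6)*a.2*b.2 + (1/8)*a.2*b.1 + (1/4)*a.2*b.1*b.2 + (-1/4)*a.2*b.1^2 + (1/12)*a.2^2 + (-1/4)*a.2^2*b.1 + (1/4)*a.2^2*b.1^2 + (1/8)*a.1*b.2 + (-1/4)*a.1*b.2^2 + (-1/6)*a.1*b.1 + (1/4)*a.1*b.1*b.2 + (-1/8)*a.1*a.2 + (1/4)*a.1*a.2*b.2 + (1/4)*a.1*a.2*b.1 + (-1/2)*a.1*a.2*b.1*b.2 + (1/12)*a.1^2 + (-1/4)*a.1^2*b.2 + (1/4)*a.1^2*b.2^2 := by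
  rw [show (fun p : ℝ × ℝ => ((b.1-a.1)*(p.2-a.2)-(p.1-a.1)*(b.2-a.2))^2/4)
      = fun p => ((1/4)*a.2^2*b.1^2 + (-1/2)*a.1*a.2*b.1*b.2 + (1/4)*a.1^2*b.2^2) + ((1/2)*a.2*b.1*b.2 + (-1/2)*a.2^2*b.1 + (-1/2)*a.1*b.2^2 + (1/2)*a.1*a.2*b.2)*p.1 + ((-1/2)*a.2*b.1^2 + (1/2)*a.1*b.1*b.2 + (1/2)*a.1*a.2*b.1 + (-1/2)*a.1^2*b.2)*p.2 + ((1/4)*b.2^2 + (-1/2)*a.2*b.2 + (1/4)*a.2^2)*p.1^2 + ((-1/2)*b.1*b.2 + (1/2)*a.2*b.1 + (1/2)*a.1*b.2 + (-1/2)*a.1*a.2)*p.1*p.2 + ((1/4)*b.1^2 + (-1/2)*a.1*b.1 + (1/4)*a.1^2)*p.2^2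
    from funext fun p => by ring, sq_int]
  ring

lemma sq_h1 (a : ℝ × ℝ) :
    (∫ p in Sq, ((1/12)*p.2^2 + (-1/8)*p.1*p.2 + (1/12)*p.1^2 + (-1/6)*a.2*p.2 + (1/8)*a.2*p.1 + (1/4)*a.2*p.1*p.2 + (-1/4)*a.2*p.1^2 + (1/12)*a.2^2 + (-1/4)*a.2^2*p.1 + (1/4)*a.2^2*p.1^2 + (1/8)*a.1*p.2 + (-1/4)*a.1*p.2^2 + (-1/6)*a.1*p.1 + (1/4)*a.1*p.1*p.2 + (-1/8)*a.1*a.2 + (1/4)*a.1*a.2*p.2 + (1/4)*a.1*a.2*p.1 + (-1/2)*a.1*a.2*p.1*p.2 + (1/12)*a.1^2 + (-1/4)*a.1^2*p.2 + (1/4)*a.1^2*p.2^2))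
      = (7/288) + (-1/24)*a.2 + (1/24)*a.2^2 + (-1/24)*a.1 + (1/24)*a.1^2 := by
  rw [show (fun p : ℝ × ℝ => ((1/12)*p.2^2 + (-1/8)*p.1*p.2 + (1/12)*p.1^2 + (-1/6)*a.2*p.2 + (1/8)*a.2*p.1 + (1/4)*a.2*p.1*p.2 + (-1/4)*a.2*p.1^2 + (1/12)*a.2^2 + (-1/4)*a.2^2*p.1 + (1/4)*a.2^2*p.1^2 + (1/8)*a.1*p.2 + (-1/4)*a.1*p.2^2 + (-1/6)*a.1*p.1 + (1/4)*a.1*p.1*p.2 + (-1/8)*a.1*a.2 + (1/4)*a.1*a.2*p.2 + (1/4)*a.1*a.2*p.1 + (-1/2)*a.1*a.2*p.1*p.2 + (1/12)*a.1^2 + (-1/4)*a.1^2*p.2 + (1/4)*a.1^2*p.2^2))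
      = fun p => ((1/12)*a.2^2 + (-1/8)*a.1*a.2 + (1/12)*a.1^2) + ((1/8)*a.2 + (-1/4)*a.2^2 + (-1/6)*a.1 + (1/4)*a.1*a.2)*p.1 + ((-1/6)*a.2 + (1/8)*a.1 + (1/4)*a.1*a.2 + (-1/4)*a.1^2)*p.2 + ((1/12) + (-1/4)*a.2 + (1/4)*a.2^2)*p.1^2 + ((-1/8) + (1/4)*a.2 + (1/4)*a.1 + (-1/2)*a.1*a.2)*p.1*p.2 + ((1/12) + (-1/4)*a.1 + (1/4)*a.1^2)*p.2^2
    from funext fun p => by ring, sq_int]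
  ring

lemma sq_core :
    (∫ p₀ in Sq, ∫ p₁ in Sq, ∫ p₂ in Sq,
        ((p₁.1-p₀.1)*(p₂.2-p₀.2)-(p₂.1-p₀.1)*(p₁.2-p₀.2))^2/4)
      = (1/96) := by
  simp only [sq_h2, sq_h1]
  rw [show (fun p : ℝ × ℝ => ((7/288) + (-1/24)*p.2 + (1/24)*p.2^2 + (-1/24)*p.1 + (1/24)*p.1^2))
      = fun p => ((7/288)) + ((-1/24))*p.1 + ((-1/24))*p.2 + ((1/24))*p.1^2 + ((0:ℝ))*p.1*p.2 + ((1/24))*p.2^2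
    from funext fun p => by ring, sq_int]
  norm_num

abbrev E2 := EuclideanSpace ℝ (Fin 2)

def ψ : E2 ≃ᵐ ℝ × ℝ := (MeasurableEquiv.toLp 2 (Fin 2 → ℝ)).symm.trans (MeasurableEquiv.finTwoArrow)

lemma psi_apply (x : E2) : ψ x = (x 0, x 1) := rfl

lemma psi_mp : MeasurePreserving ψ volume volume :=
  (volume_preserving_finTwoArrow ℝ).comp (EuclideanSpace.volume_preserving_symm_measurableEquiv_toLp (Fin 2))

lemma transfer1 (R : Set (ℝ × ℝ)) (F : ℝ × ℝ → ℝ) :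
    ∫ x in ψ ⁻¹' R, F (ψ x) = ∫ p in R, F p :=
  psi_mp.setIntegral_preimage_emb ψ.measurableEmbedding F R

lemma triple_transfer (R : Set (ℝ × ℝ)) (_hR : MeasurableSet R) (f : ℝ × ℝ → ℝ × ℝ → ℝ × ℝ → ℝ) :
    (∫ x₀ in ψ ⁻¹' R, ∫ x₁ in ψ ⁻¹' R, ∫ x₂ in ψ ⁻¹' R, f (ψ x₀) (ψ x₁) (ψ x₂))
      = ∫ p₀ in R, ∫ p₁ in R, ∫ p₂ in R, f p₀ p₁ p₂ := by
  have h2 : ∀ p₀ p₁ : ℝ × ℝ, (∫ x₂ in ψ ⁻¹' R, f p₀ p₁ (ψ x₂)) = ∫ p₂ in R, f p₀ p₁ p₂ :=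
    fun p₀ p₁ => transfer1 R (f p₀ p₁)
  have h1 : ∀ p₀ : ℝ × ℝ, (∫ x₁ in ψ ⁻¹' R, ∫ x₂ in ψ ⁻¹' R, f p₀ (ψ x₁) (ψ x₂))
      = ∫ p₁ in R, ∫ p₂ in R, f p₀ p₁ p₂ := by
    intro p₀
    simp only [h2]
    exact transfer1 R (fun p₁ => ∫ p₂ in R, f p₀ p₁ p₂)
  simp only [h1]
  exact transfer1 R (fun p₀ => ∫ p₁ in R, ∫ p₂ in R, f p₀ p₁ p₂)

def trif : ℝ × ℝ → ℝ × ℝ → ℝ × ℝ → ℝ :=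
  fun a b c => ((b.1-a.1)*(c.2-a.2)-(c.1-a.1)*(b.2-a.2))^2/4

lemma trif_apply (a b c : ℝ × ℝ) :
    trif a b c = ((b.1-a.1)*(c.2-a.2)-(c.1-a.1)*(b.2-a.2))^2/4 := rfl

/-- The linear map sending `e₀ ↦ P`, `e₁ ↦ Q`. -/
def L0 (P Q : E2) : E2 →ₗ[ℝ] E2 where
  toFun x := x 0 • P + x 1 • Q
  map_add' x y := by
    show (x + y) 0 • P + (x + y) 1 • Q = _
    simp only [PiLp.add_apply]
    module
  map_smul' c x := by
    show (c • x) 0 • P + (c • x) 1 • Q = _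
    simp only [PiLp.smul_apply, smul_eq_mul, RingHom.id_apply]
    module

lemma L0_apply (P Q : E2) (x : E2) : L0 P Q x = x 0 • P + x 1 • Q := rfl

lemma det_L0 (P Q : E2) : LinearMap.det (L0 P Q) = P 0 * Q 1 - Q 0 * P 1 := by
  have hb := (EuclideanSpace.basisFun (Fin 2) ℝ).toBasis
  rw [← LinearMap.det_toMatrix (EuclideanSpace.basisFun (Fin 2) ℝ).toBasis, Matrix.det_fin_two]
  simp only [LinearMap.toMatrix_apply, OrthonormalBasis.coe_toBasis,
    OrthonormalBasis.coe_toBasis_repr_apply, EuclideanSpace.basisFun_repr,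
    EuclideanSpace.basisFun_apply, L0_apply]
  simp [EuclideanSpace.single_apply]

def E₀ : E2 := EuclideanSpace.single 0 1
def E₁ : E2 := EuclideanSpace.single 1 1

def T0E : Set E2 := convexHull ℝ {0, E₀, E₁}

lemma coords_sum (x : E2) : x 0 • E₀ + x 1 • E₁ = x := by
  ext i
  fin_cases i <;>
    simp [E₀, E₁, PiLp.add_apply, PiLp.smul_apply, EuclideanSpace.single_apply]

lemma T0E_eq : T0E = ψ ⁻¹' Tri := by
  apply Set.Subset.antisymm
  · apply convexHull_min
    · rintro x (rfl | rfl | rfl) <;>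
        simp [Set.mem_preimage, psi_apply, Tri, E₀, E₁, EuclideanSpace.single_apply]
    · rintro x hx y hy s t hs ht hst
      obtain ⟨hx0, hx1, hx2⟩ : 0 ≤ x 0 ∧ 0 ≤ x 1 ∧ x 0 + x 1 ≤ 1 := hx
      obtain ⟨hy0, hy1, hy2⟩ : 0 ≤ y 0 ∧ 0 ≤ y 1 ∧ y 0 + y 1 ≤ 1 := hy
      have c0 : (s • x + t • y) 0 = s * x 0 + t * y 0 := rfl
      have c1 : (s • x + t • y) 1 = s * x 1 + t * y 1 := rfl
      refine ⟨?_, ?_, ?_⟩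
      · show (0:ℝ) ≤ (s • x + t • y) 0
        rw [c0]; nlinarith
      · show (0:ℝ) ≤ (s • x + t • y) 1
        rw [c1]; nlinarith
      · show (s • x + t • y) 0 + (s • x + t • y) 1 ≤ 1
        rw [c0, c1]; nlinarith
  · rintro x hx
    obtain ⟨hx0, hx1, hx2⟩ : 0 ≤ x 0 ∧ 0 ≤ x 1 ∧ x 0 + x 1 ≤ 1 := hx
    rw [T0E, convexHull_insert ⟨E₀, Set.mem_insert E₀ {E₁}⟩, convexHull_pair, mem_convexJoin]
    by_cases hs : x 0 + x 1 = 0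
    · have h0 : x 0 = 0 := by linarith
      have h1 : x 1 = 0 := by linarith
      have hx' : x = 0 := by
        rw [← coords_sum x, h0, h1]; simp
      refine ⟨0, rfl, E₀, left_mem_segment ℝ E₀ E₁, ?_⟩
      rw [hx']
      exact left_mem_segment ℝ 0 E₀
    · have hpos : 0 < x 0 + x 1 := lt_of_le_of_ne (by linarith) (Ne.symm hs)
      set s := x 0 + x 1 with hsdef
      refine ⟨0, rfl, (x 0 / s) • E₀ + (x 1 / s) • E₁,
        ⟨x 0 / s, x 1 / s, div_nonneg hx0 hpos.le, div_nonneg hx1 hpos.le, by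
          field_simp; exact hsdef.symm, rfl⟩, ?_⟩
      refine ⟨1 - s, s, by linarith, hpos.le, by ring, ?_⟩
      rw [smul_zero, zero_add, smul_add, smul_smul, smul_smul,
        mul_div_cancel₀ _ (ne_of_gt hpos), mul_div_cancel₀ _ (ne_of_gt hpos), coords_sum]

lemma measurableSet_T0E : MeasurableSet T0E := by
  rw [T0E_eq]; exact ψ.measurable measurableSet_Tri

lemma volume_T0E : volume T0E = ENNReal.ofReal (1/2) := by
  rw [T0E_eq, psi_mp.measure_preimage measurableSet_Tri.nullMeasurableSet, volume_Tri]

lemma aff_map (A P Q : E2) : ∃ f : E2 →ᵃ[ℝ] E2,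
    (⇑f = fun x => A + L0 P Q x) ∧ f.linear = L0 P Q := by
  refine ⟨⟨fun x => A + L0 P Q x, L0 P Q, fun p v => ?_⟩, rfl, rfl⟩
  simp only [vadd_eq_add, map_add]
  abel

lemma hull_image (A P Q : E2) :
    convexHull ℝ {A, A + P, A + Q} = (fun x => A + L0 P Q x) '' T0E := by
  obtain ⟨f, hf, -⟩ := aff_map A P Q
  rw [T0E, ← hf, AffineMap.image_convexHull]
  congr 1
  simp only [Set.image_insert_eq, Set.image_singleton, hf]
  have h0 : A + L0 P Q 0 = A := by simp
  have h1 : A + L0 P Q E₀ = A + P := by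
    rw [L0_apply]
    simp [E₀, E₁, EuclideanSpace.single_apply]
  have h2 : A + L0 P Q E₁ = A + Q := by
    rw [L0_apply]
    simp [E₀, E₁, EuclideanSpace.single_apply]
  rw [h0, h1, h2]

lemma vol_image_L (P Q : E2) (s : Set E2) (A : E2) :
    volume ((fun x => A + L0 P Q x) '' s)
      = ENNReal.ofReal |P 0 * Q 1 - Q 0 * P 1| * volume s := by
  have : (fun x => A + L0 P Q x) '' s = (fun y => A + y) '' (L0 P Q '' s) := by
    rw [Set.image_image]
  rw [this, Set.image_add_left, measure_preimage_add, Measure.addHaar_image_linearMap, det_L0]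

lemma area_hull (A B C : E2) :
    volume (convexHull ℝ {A, B, C})
      = ENNReal.ofReal (|(B 0 - A 0)*(C 1 - A 1) - (C 0 - A 0)*(B 1 - A 1)|/2) := by
  have hB : A + (B - A) = B := by abel
  have hC : A + (C - A) = C := by abel
  have h := hull_image A (B - A) (C - A)
  rw [hB, hC] at h
  rw [h, vol_image_L, volume_T0E, ← ENNReal.ofReal_mul (abs_nonneg _)]
  have e0 : (B - A) 0 = B 0 - A 0 := rfl
  have e1 : (B - A) 1 = B 1 - A 1 := rfl
  have e2 : (C - A) 0 = C 0 - A 0 := rfl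
  have e3 : (C - A) 1 = C 1 - A 1 := rfl
  rw [e0, e1, e2, e3]
  congr 1
  ring

lemma area_sq (a b c : E2) :
    (volume (convexHull ℝ {a, b, c})).toReal ^ 2 = trif (ψ a) (ψ b) (ψ c) := by
  rw [area_hull, ENNReal.toReal_ofReal (by positivity)]
  show _ = ((b 0 - a 0)*(c 1 - a 1) - (c 0 - a 0)*(b 1 - a 1))^2/4
  rw [div_pow, sq_abs]
  norm_num

lemma measurableSet_Sq : MeasurableSet Sq := measurableSet_Icc.prod measurableSet_Icc

lemma hSet : {x : E2 | ∀ i, x i ∈ Set.Icc (0:ℝ) 1} = ψ ⁻¹' Sq := by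
  ext x
  simp only [Set.mem_setOf_eq, Set.mem_preimage, psi_apply, Sq, Set.mem_prod]
  constructor
  · intro h; exact ⟨h 0, h 1⟩
  · rintro ⟨h0, h1⟩ i; fin_cases i <;> assumption

/-- The second moment of the area of a random triangle in a unit-area triangle equals
`1/72`, and in the unit square equals `1/96`. -/
theorem stmt_6 :
    (∀ A B C : EuclideanSpace ℝ (Fin 2), volume (convexHull ℝ {A, B, C}) = 1 →
      (∫ x₀ in convexHull ℝ {A, B, C}, ∫ x₁ in convexHull ℝ {A, B, C},
          ∫ x₂ in convexHull ℝ {A, B, C},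
            (volume (convexHull ℝ {x₀, x₁, x₂})).toReal ^ 2)
        = 1 / 72) ∧
    (∫ x₀ in {x : EuclideanSpace ℝ (Fin 2) | ∀ i, x i ∈ Set.Icc (0:ℝ) 1},
        ∫ x₁ in {x : EuclideanSpace ℝ (Fin 2) | ∀ i, x i ∈ Set.Icc (0:ℝ) 1},
          ∫ x₂ in {x : EuclideanSpace ℝ (Fin 2) | ∀ i, x i ∈ Set.Icc (0:ℝ) 1},
            (volume (convexHull ℝ {x₀, x₁, x₂})).toReal ^ 2)
      = 1 / 96 := by
  constructor
  · intro A B C hV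
    set d : ℝ := (B 0 - A 0)*(C 1 - A 1) - (C 0 - A 0)*(B 1 - A 1) with hd
    rw [area_hull A B C, ← hd, ENNReal.ofReal_eq_one] at hV
    have habs : |d| = 2 := by linarith
    set L : E2 →ₗ[ℝ] E2 := L0 (B - A) (C - A) with hL
    have hcoords : (B - A) 0 * (C - A) 1 - (C - A) 0 * (B - A) 1 = d := by
      have e0 : (B - A) 0 = B 0 - A 0 := rfl
      have e1 : (B - A) 1 = B 1 - A 1 := rfl
      have e2 : (C - A) 0 = C 0 - A 0 := rfl
      have e3 : (C - A) 1 = C 1 - A 1 := rfl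
      rw [e0, e1, e2, e3, hd]
    have hdet : LinearMap.det L = d := by rw [hL, det_L0, hcoords]
    have hdabs : |LinearMap.det L| = 2 := by rw [hdet]; exact habs
    have hd0 : LinearMap.det L ≠ 0 := by
      intro h; rw [h] at hdabs; norm_num at hdabs
    have hinj : Function.Injective (⇑L) := (L.equivOfDetNeZero hd0).injective
    set φ : E2 → E2 := fun x => A + L x with hφ
    have hinjφ : Function.Injective φ := fun a b h => hinj (by
      have : A + L a = A + L b := h
      exact add_left_cancel this)
    have hT : convexHull ℝ {A, B, C} = φ '' T0E := by
      have hB : A + (B - A) = B := by abel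
      have hC : A + (C - A) = C := by abel
      have := hull_image A (B - A) (C - A)
      rw [hB, hC] at this
      exact this
    set Lc : E2 →L[ℝ] E2 := LinearMap.toContinuousLinearMap L with hLc
    have hdetLc : |ContinuousLinearMap.det Lc| = 2 := by
      rw [hLc]
      show |LinearMap.det ((LinearMap.toContinuousLinearMap L : E2 →L[ℝ] E2) : E2 →ₗ[ℝ] E2)| = 2
      rw [LinearMap.coe_toContinuousLinearMap]
      exact hdabs
    have hDer : ∀ x : E2, HasFDerivAt φ Lc x := by
      intro x
      have h1 : HasFDerivAt (fun y : E2 => A + Lc y) Lc x := (Lc.hasFDerivAt).const_add A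
      have h2 : (fun y : E2 => A + Lc y) = φ := rfl
      rwa [h2] at h1
    have hcov : ∀ g : E2 → ℝ, (∫ x in φ '' T0E, g x) = ∫ x in T0E, 2 * g (φ x) := by
      intro g
      rw [integral_image_eq_integral_abs_det_fderiv_smul volume measurableSet_T0E
        (fun x _ => (hDer x).hasFDerivWithinAt) (hinjφ.injOn) g]
      congr 1
      funext x
      rw [hdetLc, smul_eq_mul]
    have hscale : ∀ a b c : E2, (volume (convexHull ℝ {φ a, φ b, φ c})).toReal ^ 2
        = 4 * (volume (convexHull ℝ {a, b, c})).toReal ^ 2 := by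
      intro a b c
      have himg : convexHull ℝ {φ a, φ b, φ c} = φ '' convexHull ℝ {a, b, c} := by
        obtain ⟨f, hf, -⟩ := aff_map A (B - A) (C - A)
        have hfφ : ⇑f = φ := by rw [hf, hφ, hL]
        rw [← hfφ, AffineMap.image_convexHull]
        congr 1
        simp only [Set.image_insert_eq, Set.image_singleton, hfφ]
      rw [himg, hφ, hL]
      rw [vol_image_L (B - A) (C - A) _ A, hcoords]
      rw [ENNReal.toReal_mul, ENNReal.toReal_ofReal (abs_nonneg d), habs]
      ring
    rw [hT]
    simp only [hcov]
    simp only [hscale]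
    simp only [area_sq]
    simp only [integral_const_mul]
    rw [T0E_eq, triple_transfer Tri measurableSet_Tri trif]
    simp only [trif_apply]
    rw [tri_core]
    norm_num
  · rw [hSet]
    simp only [area_sq]
    rw [triple_transfer Sq measurableSet_Sq trif]
    simp only [trif_apply]
    rw [sq_core]
end
end

section
/- Under the rigid motion x ↦ Mx + b (M ∈ SO(d)), the hyperplane parametrized by η (via ηᵀx = 1) maps under g⁻¹ to the hyperplane parametrized by η' = Mη/(1 + bᵀMη), and the Jacobian determinant of the map η ↦ η' equals det(M)/(1 + bᵀMη)^{d+1}; consequently the measure ‖η‖^{−(1+d)} dη on ℝᵈ is invariant under this action. -/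
open MeasureTheory Matrix

noncomputable def dotCLM {d : ℕ} (c : Fin d → ℝ) : (Fin d → ℝ) →L[ℝ] ℝ :=
  LinearMap.toContinuousLinearMap
    { toFun := fun v => c ⬝ᵥ v
      map_add' := fun x y => by simp [dotProduct_add]
      map_smul' := fun r x => by simp [dotProduct_smul] }

@[simp] lemma dotCLM_apply {d : ℕ} (c v : Fin d → ℝ) : dotCLM c v = c ⬝ᵥ v := rfl

noncomputable def mulCLM {d : ℕ} (M : Matrix (Fin d) (Fin d) ℝ) :
    (Fin d → ℝ) →L[ℝ] (Fin d → ℝ) :=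
  LinearMap.toContinuousLinearMap M.mulVecLin

@[simp] lemma mulCLM_apply {d : ℕ} (M : Matrix (Fin d) (Fin d) ℝ) (v : Fin d → ℝ) :
    mulCLM M v = M *ᵥ v := rfl

noncomputable def Dmap {d : ℕ} (M : Matrix (Fin d) (Fin d) ℝ) (b η : Fin d → ℝ) :
    (Fin d → ℝ) →L[ℝ] (Fin d → ℝ) :=
  (1 + b ⬝ᵥ M.mulVec η)⁻¹ • mulCLM M +
    ((-((1 + b ⬝ᵥ M.mulVec η) ^ 2)⁻¹) • dotCLM (Mᵀ *ᵥ b)).smulRight (M *ᵥ η)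

lemma hasFDerivAt_T {d : ℕ} (M : Matrix (Fin d) (Fin d) ℝ) (b η : Fin d → ℝ)
    (h : 1 + b ⬝ᵥ M.mulVec η ≠ 0) :
    HasFDerivAt (fun v : Fin d → ℝ => (1 + b ⬝ᵥ M.mulVec v)⁻¹ • M.mulVec v)
      (Dmap M b η) η := by
  have hφ : ∀ v : Fin d → ℝ, b ⬝ᵥ M.mulVec v = dotCLM (Mᵀ *ᵥ b) v := by
    intro v
    simp [Matrix.dotProduct_mulVec, Matrix.mulVec_transpose]
  have hg : HasFDerivAt (fun v : Fin d → ℝ => 1 + b ⬝ᵥ M.mulVec v)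
      (dotCLM (Mᵀ *ᵥ b)) η := by
    simp only [hφ]
    have := (hasFDerivAt_const (1:ℝ) η).add (dotCLM (Mᵀ *ᵥ b)).hasFDerivAt
    rw [zero_add] at this
    exact this
  have hc : HasFDerivAt (fun v : Fin d → ℝ => (1 + b ⬝ᵥ M.mulVec v)⁻¹)
      ((-((1 + b ⬝ᵥ M.mulVec η) ^ 2)⁻¹) • dotCLM (Mᵀ *ᵥ b)) η :=
    (hasDerivAt_inv h).comp_hasFDerivAt η hg
  have hA : HasFDerivAt (fun v : Fin d → ℝ => M.mulVec v) (mulCLM M) η :=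
    (mulCLM M).hasFDerivAt
  exact hc.smul hA

lemma Dmap_det {d : ℕ} (M : Matrix (Fin d) (Fin d) ℝ) (b η : Fin d → ℝ)
    (h : 1 + b ⬝ᵥ M.mulVec η ≠ 0) :
    (Dmap M b η).det = M.det / (1 + b ⬝ᵥ M.mulVec η) ^ (d + 1) := by
  set t := b ⬝ᵥ M.mulVec η with ht
  set a := (1 + t)⁻¹ with ha
  set w := Mᵀ *ᵥ b with hw
  set N : Matrix (Fin d) (Fin d) ℝ :=
    a • M + (-(a ^ 2)) • (replicateCol Unit (M *ᵥ η) * replicateRow Unit w) with hN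
  have hcr : ∀ v : Fin d → ℝ,
      (replicateCol Unit (M *ᵥ η) * replicateRow Unit w) *ᵥ v = (w ⬝ᵥ v) • (M *ᵥ η) := by
    intro v
    funext j
    simp [Matrix.mulVec, Matrix.mul_apply, dotProduct, Finset.mul_sum, mul_comm, mul_assoc,
      mul_left_comm]
  have hcoe : (Dmap M b η : (Fin d → ℝ) →ₗ[ℝ] (Fin d → ℝ)) = Matrix.toLin' N := by
    apply LinearMap.ext
    intro v
    rw [ContinuousLinearMap.coe_coe]
    simp only [Dmap, ContinuousLinearMap.add_apply, ContinuousLinearMap.smul_apply,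
      ContinuousLinearMap.smulRight_apply, ContinuousLinearMap.coe_smul', Pi.smul_apply,
      mulCLM_apply, dotCLM_apply, Matrix.toLin'_apply, hN,
      Matrix.add_mulVec, Matrix.smul_mulVec, hcr, ← hw]
    have h2 : ((1 + t) ^ 2)⁻¹ = a ^ 2 := by rw [ha, inv_pow]
    funext i
    simp only [Pi.add_apply, Pi.smul_apply, smul_eq_mul, ← ha, h2]
    rw [← ht, h2, ← ha]
    ring
  have hdet : (Dmap M b η).det = N.det := by
    show LinearMap.det ((Dmap M b η : (Fin d → ℝ) →ₗ[ℝ] (Fin d → ℝ))) = N.det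
    rw [hcoe, LinearMap.det_toLin']
  have hfac : N = a • (M * (1 + replicateCol Unit ((-a) • η) * replicateRow Unit w)) := by
    ext i j
    simp only [hN, Matrix.add_apply, Matrix.smul_apply, smul_eq_mul, Matrix.mul_apply,
      Matrix.one_apply, Matrix.replicateCol_apply, Matrix.replicateRow_apply, Matrix.mulVec, dotProduct,
      Pi.smul_apply, mul_add, Finset.sum_add_distrib, Finset.mul_sum, Fintype.sum_unique]
    simp only [mul_ite, mul_one, mul_zero, Finset.sum_ite_eq', Finset.mem_univ, if_true]
    rw [Finset.sum_congr rfl (fun k _ => by ring : ∀ k ∈ Finset.univ,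
      a * (M i k * (-a * η k * w j)) = (-(a^2) * w j) * (M i k * η k))]
    rw [← Finset.mul_sum]
    ring
  have hw_eta : w ⬝ᵥ η = t := by
    rw [hw, ht, Matrix.dotProduct_mulVec, Matrix.mulVec_transpose]
  rw [hdet, hfac, Matrix.det_smul, Matrix.det_mul, Matrix.det_one_add_replicateCol_mul_replicateRow,
    dotProduct_smul, hw_eta, Fintype.card_fin]
  rw [ha]
  field_simp
  try ring
  try exact Or.inl trivial
  have h1 : (1 + t)⁻¹ ^ d * (1 + t) ^ d = 1 := by rw [inv_pow, inv_mul_cancel₀ (pow_ne_zero _ h)]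
  have h2 : (1 + t)⁻¹ * (1 + t) = 1 := inv_mul_cancel₀ h
  linear_combination M.det * h1 - M.det * ((1 + t)⁻¹ ^ d * (1 + t) ^ d) * t * h2

lemma sum_sq_mulVec {d : ℕ} (M : Matrix (Fin d) (Fin d) ℝ) (hM : Mᵀ * M = 1) (η : Fin d → ℝ) :
    ∑ i, (M *ᵥ η) i ^ 2 = ∑ i, η i ^ 2 := by
  have h1 : ∑ i, (M *ᵥ η) i ^ 2 = (M *ᵥ η) ⬝ᵥ (M *ᵥ η) := by
    simp [dotProduct, pow_two]
  have h2 : ∑ i, η i ^ 2 = η ⬝ᵥ η := by simp [dotProduct, pow_two]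
  rw [h1, h2, Matrix.dotProduct_mulVec, ← Matrix.mulVec_transpose,
    Matrix.mulVec_mulVec, hM, Matrix.one_mulVec]

lemma norm_part {d : ℕ} (M : Matrix (Fin d) (Fin d) ℝ) (hM : Mᵀ * M = 1) (b η : Fin d → ℝ)
    (h : 1 + b ⬝ᵥ M.mulVec η ≠ 0) :
    Real.sqrt (∑ i, ((1 + b ⬝ᵥ M.mulVec η)⁻¹ • M.mulVec η) i ^ 2)
      = Real.sqrt (∑ i, η i ^ 2) / |1 + b ⬝ᵥ M.mulVec η| := by
  set t := b ⬝ᵥ M.mulVec η with ht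
  have h1 : ∑ i, (((1 + t)⁻¹ • M.mulVec η) i) ^ 2 = ((1 + t)⁻¹) ^ 2 * ∑ i, (M *ᵥ η) i ^ 2 := by
    simp [Pi.smul_apply, smul_eq_mul, mul_pow, Finset.mul_sum]
  rw [h1, sum_sq_mulVec M hM, Real.sqrt_mul (sq_nonneg _), Real.sqrt_sq_eq_abs, abs_inv,
    inv_mul_eq_div]

lemma null_hyperplane {d : ℕ} (c : Fin d → ℝ) (r : ℝ) (hr : r ≠ 0) :
    volume {η : Fin d → ℝ | r + c ⬝ᵥ η = 0} = 0 := by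
  rcases eq_or_ne c 0 with rfl | hc
  · have : {η : Fin d → ℝ | r + (0 : Fin d → ℝ) ⬝ᵥ η = 0} = ∅ := by
      ext η; simp [hr]
    rw [this]; simp
  · set φ : (Fin d → ℝ) →ₗ[ℝ] ℝ :=
      { toFun := fun v => c ⬝ᵥ v
        map_add' := fun x y => by simp [dotProduct_add]
        map_smul' := fun s x => by simp [dotProduct_smul] } with hφ
    have hφc : φ c ≠ 0 := by
      have : φ c = ∑ i, c i ^ 2 := by simp [hφ, dotProduct, pow_two]
      rw [this]
      have hpos : 0 < ∑ i, c i ^ 2 := by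
        obtain ⟨i, hi⟩ : ∃ i, c i ≠ 0 := by
          by_contra hall
          push_neg at hall
          exact hc (funext hall)
        exact Finset.sum_pos' (fun j _ => sq_nonneg _)
          ⟨i, Finset.mem_univ i, by positivity⟩
      positivity
    set x₀ : Fin d → ℝ := (-r / φ c) • c with hx₀
    have hφx₀ : φ x₀ = -r := by
      rw [hx₀, LinearMap.map_smul, smul_eq_mul, div_mul_cancel₀ _ hφc]
    have hset : {η : Fin d → ℝ | r + c ⬝ᵥ η = 0}
        = (fun y => x₀ + y) '' (LinearMap.ker φ : Set (Fin d → ℝ)) := by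
      ext η
      constructor
      · intro hη
        refine ⟨η - x₀, ?_, by module⟩
        have hdη : c ⬝ᵥ η = -r := by
          have := hη
          simp only [Set.mem_setOf_eq] at this
          linarith
        have : φ η = -r := hdη
        simp [LinearMap.mem_ker, map_sub, this, hφx₀]
      · rintro ⟨y, hy, rfl⟩
        have : φ (x₀ + y) = -r := by
          rw [map_add, hφx₀, LinearMap.mem_ker.mp hy, add_zero]
        have hdot : c ⬝ᵥ (x₀ + y) = -r := this
        simp only [Set.mem_setOf_eq, hdot]
        ring
    rw [hset, Set.image_add_left, measure_preimage_add]
    apply Measure.addHaar_submodule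
    intro htop
    rw [LinearMap.ker_eq_top] at htop
    exact hφc (by rw [htop]; rfl)

lemma measure_part {d : ℕ} (M : Matrix (Fin d) (Fin d) ℝ) (hM : Mᵀ * M = 1) (hdet : M.det = 1)
    (b : Fin d → ℝ) :
    Measure.map (fun η : Fin d → ℝ => (1 + b ⬝ᵥ M.mulVec η)⁻¹ • M.mulVec η)
        (volume.withDensity fun η : Fin d → ℝ =>
          ENNReal.ofReal (Real.sqrt (∑ i, η i ^ 2) ^ (-(1 + (d:ℝ)))))
      = volume.withDensity fun η : Fin d → ℝ =>
          ENNReal.ofReal (Real.sqrt (∑ i, η i ^ 2) ^ (-(1 + (d:ℝ)))) := by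
  have hMMT : M * Mᵀ = 1 := mul_eq_one_comm.mp hM
  set T : (Fin d → ℝ) → (Fin d → ℝ) :=
    fun η => (1 + b ⬝ᵥ M.mulVec η)⁻¹ • M.mulVec η with hT
  set w : (Fin d → ℝ) → ENNReal :=
    fun η => ENNReal.ofReal (Real.sqrt (∑ i, η i ^ 2) ^ (-(1 + (d:ℝ)))) with hwdef
  have hφeq : (fun η : Fin d → ℝ => b ⬝ᵥ M.mulVec η) = fun η => dotCLM (Mᵀ *ᵥ b) η := by
    funext v; simp [Matrix.dotProduct_mulVec, Matrix.mulVec_transpose]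
  have hcontφ : Continuous fun η : Fin d → ℝ => 1 + b ⬝ᵥ M.mulVec η := by
    have h0 : Continuous fun η : Fin d → ℝ => b ⬝ᵥ M.mulVec η :=
      ((dotCLM (Mᵀ *ᵥ b)).continuous).congr fun x => (congrFun hφeq x).symm
    exact continuous_const.add h0
  have hTmeas : Measurable T := by
    apply Measurable.fun_smul
    · exact hcontφ.measurable.inv
    · have hc : Continuous (fun v : Fin d → ℝ => M.mulVec v) :=
        ((mulCLM M).continuous).congr fun x => by simp
      exact hc.measurable
  set S : Set (Fin d → ℝ) := {η | 1 + b ⬝ᵥ M.mulVec η ≠ 0} with hS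
  have hSopen : IsOpen S := by
    have : S = (fun η : Fin d → ℝ => 1 + b ⬝ᵥ M.mulVec η) ⁻¹' {(0:ℝ)}ᶜ := by
      ext η; simp [hS]
    rw [this]; exact isOpen_compl_singleton.preimage hcontφ
  have hZ : volume Sᶜ = 0 := by
    have : Sᶜ = {η : Fin d → ℝ | 1 + (Mᵀ *ᵥ b) ⬝ᵥ η = 0} := by
      ext η
      simp only [hS, Set.mem_compl_iff, Set.mem_setOf_eq, not_not]
      rw [show b ⬝ᵥ M.mulVec η = (Mᵀ *ᵥ b) ⬝ᵥ η by
        simp [Matrix.dotProduct_mulVec, Matrix.mulVec_transpose]]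
    rw [this]; exact null_hyperplane _ 1 one_ne_zero
  set S' : Set (Fin d → ℝ) := {η | 1 - b ⬝ᵥ η ≠ 0} with hS'
  have hZ' : volume S'ᶜ = 0 := by
    have : S'ᶜ = {η : Fin d → ℝ | 1 + (-b) ⬝ᵥ η = 0} := by
      ext η
      simp only [hS', Set.mem_compl_iff, Set.mem_setOf_eq, not_not, neg_dotProduct]
      constructor <;> intro h <;> linarith
    rw [this]; exact null_hyperplane _ 1 one_ne_zero
  -- inverse map
  set U : (Fin d → ℝ) → (Fin d → ℝ) := fun η' => (1 - b ⬝ᵥ η')⁻¹ • (Mᵀ *ᵥ η') with hU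
  have key1 : ∀ η : Fin d → ℝ, 1 + b ⬝ᵥ M.mulVec η ≠ 0 →
      1 - b ⬝ᵥ T η = (1 + b ⬝ᵥ M.mulVec η)⁻¹ := by
    intro η h
    rw [hT]
    simp only [dotProduct_smul, smul_eq_mul]
    field_simp
    ring
  have key2 : ∀ η : Fin d → ℝ, 1 + b ⬝ᵥ M.mulVec η ≠ 0 → U (T η) = η := by
    intro η h
    rw [hU]
    simp only [key1 η h, inv_inv]
    rw [hT]
    simp only [Matrix.mulVec_smul, Matrix.mulVec_mulVec, hM, Matrix.one_mulVec,
      smul_smul]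
    rw [mul_inv_cancel₀ h, one_smul]
  have key3 : ∀ η' : Fin d → ℝ, 1 - b ⬝ᵥ η' ≠ 0 →
      1 + b ⬝ᵥ M.mulVec (U η') = (1 - b ⬝ᵥ η')⁻¹ := by
    intro η' h
    rw [hU]
    simp only [Matrix.mulVec_smul, Matrix.mulVec_mulVec, hMMT, Matrix.one_mulVec,
      dotProduct_smul, smul_eq_mul]
    field_simp
    ring
  have key4 : ∀ η' : Fin d → ℝ, 1 - b ⬝ᵥ η' ≠ 0 → T (U η') = η' := by
    intro η' h
    rw [hT]
    simp only [key3 η' h, inv_inv]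
    rw [hU]
    simp only [Matrix.mulVec_smul, Matrix.mulVec_mulVec, hMMT, Matrix.one_mulVec,
      smul_smul]
    rw [mul_inv_cancel₀ h, one_smul]
  ext s hs
  rw [Measure.map_apply hTmeas hs, withDensity_apply _ (hTmeas hs), withDensity_apply _ hs]
  set A : Set (Fin d → ℝ) := T ⁻¹' s ∩ S with hA
  have hAmeas : MeasurableSet A := (hTmeas hs).inter hSopen.measurableSet
  have hA_ae : A =ᵐ[volume] T ⁻¹' s := by
    have h1 : S =ᵐ[volume] (Set.univ : Set (Fin d → ℝ)) :=
      MeasureTheory.ae_eq_univ.mpr hZ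
    exact MeasureTheory.inter_ae_eq_left_of_ae_eq_univ h1
  have hsS'_ae : (s ∩ S' : Set (Fin d → ℝ)) =ᵐ[volume] s := by
    have h1 : S' =ᵐ[volume] (Set.univ : Set (Fin d → ℝ)) :=
      MeasureTheory.ae_eq_univ.mpr hZ'
    exact MeasureTheory.inter_ae_eq_left_of_ae_eq_univ h1
  have himg : T '' A = s ∩ S' := by
    ext y
    constructor
    · rintro ⟨η, ⟨hηs, hηS⟩, rfl⟩
      refine ⟨hηs, ?_⟩
      have hηS2 : 1 + b ⬝ᵥ M.mulVec η ≠ 0 := hηS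
      show 1 - b ⬝ᵥ T η ≠ 0
      rw [key1 η hηS2]
      exact inv_ne_zero hηS2
    · rintro ⟨hys, hyS'⟩
      have hyS2 : 1 - b ⬝ᵥ y ≠ 0 := hyS'
      refine ⟨U y, ⟨?_, ?_⟩, key4 y hyS2⟩
      · show T (U y) ∈ s
        rw [key4 y hyS2]; exact hys
      · show 1 + b ⬝ᵥ M.mulVec (U y) ≠ 0
        rw [key3 y hyS2]
        exact inv_ne_zero hyS2
  have hinj : Set.InjOn T A := by
    intro x hx y hy hxy
    have := key2 x hx.2
    rw [← key2 x hx.2, ← key2 y hy.2, hxy]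
  have hderiv : ∀ x ∈ A, HasFDerivWithinAt T (Dmap M b x) A x :=
    fun x hx => (hasFDerivAt_T M b x hx.2).hasFDerivWithinAt
  have hpt : ∀ x ∈ A, ENNReal.ofReal |(Dmap M b x).det| * w (T x) = w x := by
    intro x hx
    have h : 1 + b ⬝ᵥ M.mulVec x ≠ 0 := hx.2
    set t := b ⬝ᵥ M.mulVec x with htx
    have hdetx : (Dmap M b x).det = 1 / (1 + t) ^ (d + 1) := by
      rw [Dmap_det M b x h, hdet]
    have hwTx : Real.sqrt (∑ i, (T x) i ^ 2)
        = Real.sqrt (∑ i, x i ^ 2) / |1 + t| := by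
      rw [hT]
      exact norm_part M hM b x h
    rw [hwdef]
    simp only [hwTx, hdetx]
    rw [← ENNReal.ofReal_mul (abs_nonneg _)]
    congr 1
    set q := Real.sqrt (∑ i, x i ^ 2) with hqdef
    have hq : 0 ≤ q := Real.sqrt_nonneg _
    set u := |1 + t| with hudef
    have hu : 0 < u := abs_pos.mpr h
    have hur : u ^ (-(1 + (d:ℝ))) = (u ^ (d + 1))⁻¹ := by
      rw [Real.rpow_neg hu.le, ← Real.rpow_natCast u (d + 1)]
      congr 1
      push_cast
      ring
    rw [abs_div, abs_one, abs_pow, Real.div_rpow hq (abs_nonneg _), hur, ← hudef]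
    have hup : u ^ (d + 1) ≠ 0 := by positivity
    field_simp
  calc ∫⁻ η in T ⁻¹' s, w η ∂volume
      = ∫⁻ η in A, w η ∂volume := (setLIntegral_congr hA_ae).symm
    _ = ∫⁻ x in A, ENNReal.ofReal |(Dmap M b x).det| * w (T x) ∂volume :=
        (setLIntegral_congr_fun hAmeas hpt).symm
    _ = ∫⁻ x in T '' A, w x ∂volume :=
        (lintegral_image_eq_lintegral_abs_det_fderiv_mul volume hAmeas hderiv hinj w).symm
    _ = ∫⁻ x in s ∩ S', w x ∂volume := by rw [himg]
    _ = ∫⁻ x in s, w x ∂volume := setLIntegral_congr hsS'_ae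

/-- Under the rigid motion `x ↦ Mx + b` with `M ∈ SO(d)`, the hyperplane parametrized by
`η` (via `ηᵀx = 1`) maps under `g⁻¹` to the hyperplane parametrized by
`η' = Mη/(1 + bᵀMη)`.  Claims: (i) `‖η'‖ = ‖η‖/|1 + bᵀMη|` (Euclidean norms);
(ii) the Jacobian determinant of `η ↦ η'` equals `det M/(1 + bᵀMη)^{d+1}`;
(iii) the measure `‖η‖^{-(1+d)} dη` is invariant under this action. -/
theorem stmt_13 (d : ℕ) (M : Matrix (Fin d) (Fin d) ℝ)
    (hM : Mᵀ * M = 1) (hdet : M.det = 1) (b : Fin d → ℝ) :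
    (∀ η : Fin d → ℝ, 1 + b ⬝ᵥ M.mulVec η ≠ 0 →
        Real.sqrt (∑ i, ((1 + b ⬝ᵥ M.mulVec η)⁻¹ • M.mulVec η) i ^ 2)
          = Real.sqrt (∑ i, η i ^ 2) / |1 + b ⬝ᵥ M.mulVec η|) ∧
    (∀ η : Fin d → ℝ, 1 + b ⬝ᵥ M.mulVec η ≠ 0 →
        (fderiv ℝ (fun v : Fin d → ℝ => (1 + b ⬝ᵥ M.mulVec v)⁻¹ • M.mulVec v) η).det
          = M.det / (1 + b ⬝ᵥ M.mulVec η) ^ (d + 1)) ∧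
    Measure.map (fun η : Fin d → ℝ => (1 + b ⬝ᵥ M.mulVec η)⁻¹ • M.mulVec η)
        (volume.withDensity fun η : Fin d → ℝ =>
          ENNReal.ofReal (Real.sqrt (∑ i, η i ^ 2) ^ (-(1 + (d:ℝ)))))
      = volume.withDensity fun η : Fin d → ℝ =>
          ENNReal.ofReal (Real.sqrt (∑ i, η i ^ 2) ^ (-(1 + (d:ℝ)))) := by
  refine ⟨fun η h => norm_part M hM b η h, fun η h => ?_, measure_part M hM hdet b⟩
  rw [(hasFDerivAt_T M b η h).fderiv]
  exact Dmap_det M b η h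
end

section
/- For a tetrahedron T with canonical vertices and hyperplane σ with parametrization vector (a,b,c) each > 1, the first absolute moment ι⁽¹⁾(σ) = ∫_T |ax₁+bx₂+cx₃ − 1| dλ₃ equals (1/24)(2/(abc) + a + b + c − 4). -/
open MeasureTheory
set_option maxRecDepth 10000



theorem hullEq :
    convexHull ℝ ({0, EuclideanSpace.single 0 1, EuclideanSpace.single 1 1,
        EuclideanSpace.single 2 1} : Set (EuclideanSpace ℝ (Fin 3)))
      = {x | 0 ≤ x 0 ∧ 0 ≤ x 1 ∧ 0 ≤ x 2 ∧ x 0 + x 1 + x 2 ≤ 1} := by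
  apply le_antisymm
  · apply convexHull_min
    · rintro x (rfl | rfl | rfl | rfl) <;> refine ⟨?_, ?_, ?_, ?_⟩ <;>
        norm_num [EuclideanSpace.single_apply, Fin.ext_iff]
    · rintro x ⟨hx0, hx1, hx2, hxs⟩ y ⟨hy0, hy1, hy2, hys⟩ s t hs ht hst
      refine ⟨?_, ?_, ?_, ?_⟩ <;>
        simp only [PiLp.add_apply, PiLp.smul_apply, smul_eq_mul] <;> nlinarith
  · rintro x ⟨hx0, hx1, hx2, hxs⟩
    have hmem : ∀ y ∈ ({0, EuclideanSpace.single 0 1, EuclideanSpace.single 1 1,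
        EuclideanSpace.single 2 1} : Set (EuclideanSpace ℝ (Fin 3))),
        y ∈ convexHull ℝ ({0, EuclideanSpace.single 0 1, EuclideanSpace.single 1 1,
        EuclideanSpace.single 2 1} : Set (EuclideanSpace ℝ (Fin 3))) :=
      fun y hy => subset_convexHull ℝ _ hy
    have := (convex_convexHull ℝ ({0, EuclideanSpace.single 0 1, EuclideanSpace.single 1 1,
        EuclideanSpace.single 2 1} : Set (EuclideanSpace ℝ (Fin 3)))).sum_mem
      (t := (Finset.univ : Finset (Fin 4)))
      (w := ![1 - (x 0 + x 1 + x 2), x 0, x 1, x 2])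
      (z := ![0, EuclideanSpace.single 0 1, EuclideanSpace.single 1 1, EuclideanSpace.single 2 1])
      (by intro i _; fin_cases i <;> simp <;> linarith)
      (by simp [Fin.sum_univ_four]; ring)
      (by intro i _; fin_cases i <;> apply hmem <;> simp)
    convert this using 1
    ext i
    simp only [Fin.sum_univ_four, Matrix.cons_val_zero, Matrix.cons_val_one, Matrix.head_cons,
      PiLp.add_apply, PiLp.smul_apply, smul_eq_mul, Matrix.cons_val_two, Matrix.tail_cons,
      Matrix.cons_val_three, PiLp.zero_apply, mul_zero, EuclideanSpace.single_apply]
    fin_cases i <;> norm_num [Fin.ext_iff] <;> rfl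

lemma oneD (γ K : ℝ) (hγ : 0 < γ) (hK : 0 ≤ K) (f : ℝ → ℝ) :
    ∫ z in {z : ℝ | 0 ≤ z ∧ γ * z ≤ K}, f z = ∫ z in (0:ℝ)..(K/γ), f z := by
  have hset : {z : ℝ | 0 ≤ z ∧ γ * z ≤ K} = Set.Icc 0 (K/γ) := by
    ext z
    simp only [Set.mem_setOf_eq, Set.mem_Icc, le_div_iff₀ hγ]
    constructor <;> rintro ⟨h1, h2⟩ <;> exact ⟨h1, by linarith [mul_comm γ z]⟩
  rw [hset, intervalIntegral.integral_of_le (by positivity), ← integral_Icc_eq_integral_Ioc]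

def S2 (β γ K : ℝ) : Set (ℝ × ℝ) := {p | 0 ≤ p.1 ∧ 0 ≤ p.2 ∧ β * p.1 + γ * p.2 ≤ K}

lemma S2_closed (β γ K : ℝ) : IsClosed (S2 β γ K) := by
  unfold S2
  simp only [Set.setOf_and]
  exact ((isClosed_le continuous_const continuous_fst).inter
    ((isClosed_le continuous_const continuous_snd).inter
      (isClosed_le (by fun_prop) continuous_const)))

lemma S2_subset (β γ K : ℝ) (hβ : 0 < β) (hγ : 0 < γ) :
    S2 β γ K ⊆ Set.Icc 0 (K/β) ×ˢ Set.Icc 0 (K/γ) := by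
  rintro ⟨y, z⟩ ⟨h1, h2, h3⟩
  refine ⟨⟨h1, ?_⟩, ⟨h2, ?_⟩⟩ <;> rw [le_div_iff₀] <;> nlinarith

lemma S2_compact (β γ K : ℝ) (hβ : 0 < β) (hγ : 0 < γ) : IsCompact (S2 β γ K) :=
  IsCompact.of_isClosed_subset (isCompact_Icc.prod isCompact_Icc) (S2_closed β γ K)
    (S2_subset β γ K hβ hγ)

lemma twoD (β γ K : ℝ) (hβ : 0 < β) (hγ : 0 < γ) (hK : 0 ≤ K) (f : ℝ → ℝ → ℝ)
    (hf : Continuous fun p : ℝ × ℝ => f p.1 p.2) :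
    ∫ p in S2 β γ K, f p.1 p.2 = ∫ y in (0:ℝ)..(K/β), ∫ z in (0:ℝ)..((K - β*y)/γ), f y z := by
  have hmeas : MeasurableSet (S2 β γ K) := (S2_closed β γ K).measurableSet
  have hint : IntegrableOn (fun p : ℝ × ℝ => f p.1 p.2) (S2 β γ K) :=
    hf.continuousOn.integrableOn_compact (S2_compact β γ K hβ hγ)
  rw [← integral_indicator hmeas]
  have hint2 : Integrable ((S2 β γ K).indicator fun p : ℝ × ℝ => f p.1 p.2)
      (volume.prod volume) := by
    rw [← Measure.volume_eq_prod]
    exact (integrable_indicator_iff hmeas).2 hint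
  rw [Measure.volume_eq_prod, integral_prod _ hint2]
  -- now ∫ y, ∫ z, indicator ... (y, z)
  have hslice : ∀ y ∈ Set.Icc (0:ℝ) (K/β),
      (∫ z, (S2 β γ K).indicator (fun p : ℝ × ℝ => f p.1 p.2) (y, z))
        = ∫ z in (0:ℝ)..((K - β*y)/γ), f y z := by
    intro y hy
    have hKy : 0 ≤ K - β * y := by
      rcases hy with ⟨h1, h2⟩
      nlinarith [(le_div_iff₀ hβ).1 h2]
    have : (fun z => (S2 β γ K).indicator (fun p : ℝ × ℝ => f p.1 p.2) (y, z))
        = ({z : ℝ | 0 ≤ z ∧ γ * z ≤ K - β * y}).indicator (f y) := by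
      funext z
      by_cases hz : z ∈ {z : ℝ | 0 ≤ z ∧ γ * z ≤ K - β * y}
      · rw [Set.indicator_of_mem hz,
          Set.indicator_of_mem (show (y, z) ∈ S2 β γ K from ⟨hy.1, hz.1, by
            have := hz.2; simp only [Set.mem_setOf_eq] at hz; linarith [hz.2]⟩)]
      · rw [Set.indicator_of_notMem hz, Set.indicator_of_notMem]
        rintro ⟨_, h2, h3⟩
        exact hz ⟨h2, by linarith⟩
    rw [this]
    have hsm : MeasurableSet {z : ℝ | 0 ≤ z ∧ γ * z ≤ K - β * y} := by
      simp only [Set.setOf_and]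
      exact ((isClosed_le continuous_const continuous_id).inter
        (isClosed_le (by fun_prop) continuous_const)).measurableSet
    rw [integral_indicator hsm]
    exact oneD γ (K - β*y) hγ hKy (f y)
  have hzero : ∀ y, y ∉ Set.Icc (0:ℝ) (K/β) →
      (∫ z, (S2 β γ K).indicator (fun p : ℝ × ℝ => f p.1 p.2) (y, z)) = 0 := by
    intro y hy
    have : (fun z => (S2 β γ K).indicator (fun p : ℝ × ℝ => f p.1 p.2) (y, z))
        = fun _ => (0:ℝ) := by
      funext z
      apply Set.indicator_of_notMem
      rintro ⟨h1, h2, h3⟩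
      apply hy
      exact ⟨h1, (le_div_iff₀ hβ).2 (by nlinarith)⟩
    rw [this, integral_zero]
  -- reduce outer integral to Icc
  have : (fun y => ∫ z, (S2 β γ K).indicator (fun p : ℝ × ℝ => f p.1 p.2) (y, z))
      = (Set.Icc (0:ℝ) (K/β)).indicator
          (fun y => ∫ z, (S2 β γ K).indicator (fun p : ℝ × ℝ => f p.1 p.2) (y, z)) := by
    funext y
    by_cases hy : y ∈ Set.Icc (0:ℝ) (K/β)
    · rw [Set.indicator_of_mem hy]
    · rw [Set.indicator_of_notMem hy, hzero y hy]
  rw [this, integral_indicator measurableSet_Icc,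
    setIntegral_congr_fun measurableSet_Icc hslice,
    integral_Icc_eq_integral_Ioc, ← intervalIntegral.integral_of_le (by positivity)]

def S3 (α β γ : ℝ) : Set (ℝ × ℝ × ℝ) :=
  {p | 0 ≤ p.1 ∧ 0 ≤ p.2.1 ∧ 0 ≤ p.2.2 ∧ α * p.1 + β * p.2.1 + γ * p.2.2 ≤ 1}

lemma S3_closed (α β γ : ℝ) : IsClosed (S3 α β γ) := by
  unfold S3
  simp only [Set.setOf_and]
  exact (isClosed_le continuous_const continuous_fst).inter
    ((isClosed_le continuous_const (continuous_fst.comp continuous_snd)).inter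
      ((isClosed_le continuous_const (continuous_snd.comp continuous_snd)).inter
        (isClosed_le (by fun_prop) continuous_const)))

lemma S3_compact (α β γ : ℝ) (hα : 0 < α) (hβ : 0 < β) (hγ : 0 < γ) : IsCompact (S3 α β γ) := by
  have hbig : IsCompact ((Set.Icc (0:ℝ) (1/α)) ×ˢ (Set.Icc (0:ℝ) (1/β)) ×ˢ (Set.Icc (0:ℝ) (1/γ))) :=
    isCompact_Icc.prod (isCompact_Icc.prod isCompact_Icc)
  refine hbig.of_isClosed_subset (S3_closed α β γ) ?_
  rintro ⟨x, y, z⟩ ⟨h1, h2, h3, h4⟩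
  refine ⟨⟨h1, ?_⟩, ⟨h2, ?_⟩, ⟨h3, ?_⟩⟩ <;> rw [le_div_iff₀ (by positivity)] <;> nlinarith
  -- bounds : Icc 0 (1/α) ×ˢ Icc 0 (1/β) ×ˢ Icc 0 (1/γ)

lemma threeD (α β γ : ℝ) (hα : 0 < α) (hβ : 0 < β) (hγ : 0 < γ) (f : ℝ → ℝ → ℝ → ℝ)
    (hf : Continuous fun p : ℝ × ℝ × ℝ => f p.1 p.2.1 p.2.2) :
    ∫ p in S3 α β γ, f p.1 p.2.1 p.2.2
      = ∫ x in (0:ℝ)..(1/α), ∫ y in (0:ℝ)..((1 - α*x)/β),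
          ∫ z in (0:ℝ)..((1 - α*x - β*y)/γ), f x y z := by
  have hmeas : MeasurableSet (S3 α β γ) := (S3_closed α β γ).measurableSet
  have hint : IntegrableOn (fun p : ℝ × ℝ × ℝ => f p.1 p.2.1 p.2.2) (S3 α β γ) :=
    hf.continuousOn.integrableOn_compact (S3_compact α β γ hα hβ hγ)
  rw [← integral_indicator hmeas]
  have hint2 : Integrable ((S3 α β γ).indicator fun p : ℝ × ℝ × ℝ => f p.1 p.2.1 p.2.2)
      ((volume : Measure ℝ).prod (volume : Measure (ℝ × ℝ))) := by
    rw [← Measure.volume_eq_prod]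
    exact (integrable_indicator_iff hmeas).2 hint
  rw [Measure.volume_eq_prod, integral_prod _ hint2]
  have hslice : ∀ x ∈ Set.Icc (0:ℝ) (1/α),
      (∫ q : ℝ × ℝ, (S3 α β γ).indicator (fun p : ℝ × ℝ × ℝ => f p.1 p.2.1 p.2.2) (x, q))
        = ∫ y in (0:ℝ)..((1 - α*x)/β), ∫ z in (0:ℝ)..((1 - α*x - β*y)/γ), f x y z := by
    intro x hx
    have hKx : 0 ≤ 1 - α * x := by
      rcases hx with ⟨h1, h2⟩
      rw [le_div_iff₀ hα] at h2
      nlinarith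
    have heq : (fun q : ℝ × ℝ =>
        (S3 α β γ).indicator (fun p : ℝ × ℝ × ℝ => f p.1 p.2.1 p.2.2) (x, q))
        = (S2 β γ (1 - α*x)).indicator (fun q : ℝ × ℝ => f x q.1 q.2) := by
      funext q
      by_cases hq : q ∈ S2 β γ (1 - α*x)
      · rw [Set.indicator_of_mem hq, Set.indicator_of_mem
          (show (x, q) ∈ S3 α β γ from ⟨hx.1, hq.1, hq.2.1, by
            have := hq.2.2; dsimp at this ⊢; linarith⟩)]
      · rw [Set.indicator_of_notMem hq, Set.indicator_of_notMem]
        rintro ⟨_, h2, h3, h4⟩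
        exact hq ⟨h2, h3, by dsimp at h4 ⊢; linarith⟩
    rw [heq, integral_indicator (S2_closed β γ (1 - α*x)).measurableSet]
    exact twoD β γ (1 - α*x) hβ hγ hKx (fun y z => f x y z)
      (hf.comp (by fun_prop : Continuous fun q : ℝ × ℝ => ((x, q.1, q.2) : ℝ × ℝ × ℝ)))
  have hzero : ∀ x, x ∉ Set.Icc (0:ℝ) (1/α) →
      (∫ q : ℝ × ℝ, (S3 α β γ).indicator (fun p : ℝ × ℝ × ℝ => f p.1 p.2.1 p.2.2) (x, q)) = 0 := by
    intro x hx
    have : (fun q : ℝ × ℝ =>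
        (S3 α β γ).indicator (fun p : ℝ × ℝ × ℝ => f p.1 p.2.1 p.2.2) (x, q))
        = fun _ => (0:ℝ) := by
      funext q
      apply Set.indicator_of_notMem
      rintro ⟨h1, h2, h3, h4⟩
      apply hx
      refine ⟨h1, (le_div_iff₀ hα).2 ?_⟩
      dsimp at h4
      nlinarith
    rw [this, integral_zero]
  have hind : (fun x => ∫ q : ℝ × ℝ,
      (S3 α β γ).indicator (fun p : ℝ × ℝ × ℝ => f p.1 p.2.1 p.2.2) (x, q))
      = (Set.Icc (0:ℝ) (1/α)).indicator
        (fun x => ∫ q : ℝ × ℝ,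
          (S3 α β γ).indicator (fun p : ℝ × ℝ × ℝ => f p.1 p.2.1 p.2.2) (x, q)) := by
    funext x
    by_cases hx : x ∈ Set.Icc (0:ℝ) (1/α)
    · rw [Set.indicator_of_mem hx]
    · rw [Set.indicator_of_notMem hx, hzero x hx]
  rw [hind, integral_indicator measurableSet_Icc,
    setIntegral_congr_fun measurableSet_Icc hslice,
    integral_Icc_eq_integral_Ioc, ← intervalIntegral.integral_of_le (by positivity)]

lemma poly_int_s16 (c0 c1 c2 c3 T : ℝ) :
    ∫ t in (0:ℝ)..T, (c0 + c1*t + c2*t^2 + c3*t^3)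
      = c0*T + c1*T^2/2 + c2*T^3/3 + c3*T^4/4 := by
  have h : ∀ t ∈ Set.uIcc (0:ℝ) T,
      HasDerivAt (fun t => c0*t + c1*t^2/2 + c2*t^3/3 + c3*t^4/4)
        (c0 + c1*t + c2*t^2 + c3*t^3) t := by
    intro t _
    have h1 : HasDerivAt (fun t : ℝ => c0*t) (c0*1) t := (hasDerivAt_id t).const_mul c0
    have h2 : HasDerivAt (fun t : ℝ => c1*t^2/2) (c1*(2*t^1)/2) t :=
      ((hasDerivAt_pow 2 t).const_mul c1).div_const 2
    have h3 : HasDerivAt (fun t : ℝ => c2*t^3/3) (c2*(3*t^2)/3) t :=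
      ((hasDerivAt_pow 3 t).const_mul c2).div_const 3
    have h4 : HasDerivAt (fun t : ℝ => c3*t^4/4) (c3*(4*t^3)/4) t :=
      ((hasDerivAt_pow 4 t).const_mul c3).div_const 4
    exact (((h1.add h2).add h3).add h4).congr_deriv (by ring)
  rw [intervalIntegral.integral_eq_sub_of_hasDerivAt h
    ((Continuous.intervalIntegrable (by continuity) _ _))]
  ring

lemma calcA (α β γ : ℝ) (hα : 0 < α) (hβ : 0 < β) (hγ : 0 < γ) :
    (∫ x in (0:ℝ)..(1/α), ∫ y in (0:ℝ)..((1 - α*x)/β),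
        ∫ z in (0:ℝ)..((1 - α*x - β*y)/γ), (1 - α*x - β*y - γ*z))
      = 1/(24*α*β*γ) := by
  have h1 : ∀ x y : ℝ, (∫ z in (0:ℝ)..((1 - α*x - β*y)/γ), (1 - α*x - β*y - γ*z))
      = (1 - α*x - β*y)^2/(2*γ) := by
    intro x y
    rw [intervalIntegral.integral_congr
      (g := fun z => (1 - α*x - β*y) + (-γ)*z + 0*z^2 + 0*z^3) (fun z _ => by ring), poly_int_s16]
    field_simp
    ring
  have h2 : ∀ x : ℝ, (∫ y in (0:ℝ)..((1 - α*x)/β), (1 - α*x - β*y)^2/(2*γ))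
      = (1 - α*x)^3/(6*β*γ) := by
    intro x
    rw [intervalIntegral.integral_congr
      (g := fun y => (1 - α*x)^2/(2*γ) + (-((1 - α*x)*β/γ))*y + (β^2/(2*γ))*y^2 + 0*y^3)
      (fun y _ => by ring), poly_int_s16]
    field_simp
    ring
  simp only [h1, h2]
  rw [intervalIntegral.integral_congr
    (g := fun x => 1/(6*β*γ) + (-(3*α/(6*β*γ)))*x + (3*α^2/(6*β*γ))*x^2 + (-(α^3/(6*β*γ)))*x^3)
    (fun x _ => by field_simp; ring), poly_int_s16]
  field_simp
  ring

lemma calcB (a b c : ℝ) :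
    (∫ x in (0:ℝ)..(1/1), ∫ y in (0:ℝ)..((1 - 1*x)/1),
        ∫ z in (0:ℝ)..((1 - 1*x - 1*y)/1), (a*x + b*y + c*z - 1))
      = (a + b + c)/24 - 1/6 := by
  have h1 : ∀ x y : ℝ, (∫ z in (0:ℝ)..((1 - 1*x - 1*y)/1), (a*x + b*y + c*z - 1))
      = (a*x + b*y - 1)*(1 - x - y) + c*(1 - x - y)^2/2 := by
    intro x y
    rw [intervalIntegral.integral_congr
      (g := fun z => (a*x + b*y - 1) + c*z + 0*z^2 + 0*z^3) (fun z _ => by ring), poly_int_s16]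
    ring
  have h2 : ∀ x : ℝ, (∫ y in (0:ℝ)..((1 - 1*x)/1),
      ((a*x + b*y - 1)*(1 - x - y) + c*(1 - x - y)^2/2))
      = (a*x - 1)*(1 - x)^2/2 + (b + c)*(1 - x)^3/6 := by
    intro x
    rw [intervalIntegral.integral_congr
      (g := fun y => ((a*x - 1)*(1 - x) + c*(1 - x)^2/2)
        + (b*(1 - x) - (a*x - 1) - c*(1 - x))*y + (c/2 - b)*y^2 + 0*y^3)
      (fun y _ => by ring), poly_int_s16]
    ring
  simp only [h1, h2]
  rw [intervalIntegral.integral_congr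
    (g := fun x => (-(1:ℝ)/2 + (b + c)/6) + (a/2 + 1 - (b + c)/2)*x
      + (-a - 1/2 + (b + c)/2)*x^2 + (a/2 - (b + c)/6)*x^3)
    (fun x _ => by ring), poly_int_s16]
  ring
noncomputable def Ψ : EuclideanSpace ℝ (Fin 3) ≃ᵐ ℝ × ℝ × ℝ :=
  (MeasurableEquiv.toLp 2 (Fin 3 → ℝ)).symm.trans
    ((MeasurableEquiv.piFinSuccAbove (fun _ : Fin 3 => ℝ) 0).trans
      ((MeasurableEquiv.refl ℝ).prodCongr MeasurableEquiv.finTwoArrow))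

theorem hΨ : MeasurePreserving Ψ volume volume := by
  refine MeasurePreserving.comp (g := ⇑((MeasurableEquiv.piFinSuccAbove (fun _ : Fin 3 => ℝ) 0).trans ((MeasurableEquiv.refl ℝ).prodCongr MeasurableEquiv.finTwoArrow))) (f := ⇑(MeasurableEquiv.toLp 2 (Fin 3 → ℝ)).symm) ?_ (EuclideanSpace.volume_preserving_symm_measurableEquiv_toLp (Fin 3))
  exact ((MeasurePreserving.id volume).prod (volume_preserving_finTwoArrow ℝ)).comp
    (volume_preserving_piFinSuccAbove (fun _ : Fin 3 => ℝ) 0)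

/-- For the canonical tetrahedron `𝕋₃ = conv(0,e₁,e₂,e₃)` and `a,b,c > 1`,
`∫_{𝕋₃} |ax₁ + bx₂ + cx₃ − 1| dλ₃ = (1/24)(2/(abc) + a + b + c − 4)`. -/
theorem stmt_16 (a b c : ℝ) (ha : 1 < a) (hb : 1 < b) (hc : 1 < c) :
    (∫ x in convexHull ℝ ({0, EuclideanSpace.single 0 1, EuclideanSpace.single 1 1,
        EuclideanSpace.single 2 1} : Set (EuclideanSpace ℝ (Fin 3))),
      |a * x 0 + b * x 1 + c * x 2 - 1|)
      = (1/24) * (2 / (a * b * c) + a + b + c - 4) := by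
  have ha0 : (0:ℝ) < a := by linarith
  have hb0 : (0:ℝ) < b := by linarith
  have hc0 : (0:ℝ) < c := by linarith
  rw [hullEq]
  -- transfer to ℝ³
  have htrans : (∫ x in ({x | 0 ≤ x 0 ∧ 0 ≤ x 1 ∧ 0 ≤ x 2 ∧ x 0 + x 1 + x 2 ≤ 1} :
        Set (EuclideanSpace ℝ (Fin 3))), |a * x 0 + b * x 1 + c * x 2 - 1|)
      = ∫ p in S3 1 1 1, |a * p.1 + b * p.2.1 + c * p.2.2 - 1| := by
    rw [← MeasurePreserving.setIntegral_preimage_emb (MeasurePreserving.symm Ψ hΨ)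
      Ψ.symm.measurableEmbedding (fun x => |a * x 0 + b * x 1 + c * x 2 - 1|) _]
    apply setIntegral_congr_set
    have : Ψ.symm ⁻¹' {x : EuclideanSpace ℝ (Fin 3) | 0 ≤ x 0 ∧ 0 ≤ x 1 ∧ 0 ≤ x 2 ∧
        x 0 + x 1 + x 2 ≤ 1} = S3 1 1 1 := by
      ext p
      show (0 ≤ (Ψ.symm p) 0 ∧ 0 ≤ (Ψ.symm p) 1 ∧ 0 ≤ (Ψ.symm p) 2 ∧
        (Ψ.symm p) 0 + (Ψ.symm p) 1 + (Ψ.symm p) 2 ≤ 1) ↔ _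
      have e0 : (Ψ.symm p) 0 = p.1 := rfl
      have e1 : (Ψ.symm p) 1 = p.2.1 := rfl
      have e2 : (Ψ.symm p) 2 = p.2.2 := rfl
      rw [e0, e1, e2]
      simp [S3]
    rw [this]
    exact Filter.EventuallyEq.rfl
  rw [htrans]
  -- pointwise decomposition of |u|
  have habs : ∀ p : ℝ × ℝ × ℝ, |a * p.1 + b * p.2.1 + c * p.2.2 - 1|
      = (a * p.1 + b * p.2.1 + c * p.2.2 - 1)
        + 2 * max (1 - a * p.1 - b * p.2.1 - c * p.2.2) 0 := by
    intro p
    rcases le_total 0 (a * p.1 + b * p.2.1 + c * p.2.2 - 1) with h | h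
    · rw [abs_of_nonneg h, max_eq_right (by linarith)]; ring
    · rw [abs_of_nonpos h, max_eq_left (by linarith)]; ring
  have hmeas1 : MeasurableSet (S3 1 1 1) := (S3_closed 1 1 1).measurableSet
  have hcomp1 : IsCompact (S3 1 1 1) := S3_compact 1 1 1 one_pos one_pos one_pos
  have hintu : IntegrableOn (fun p : ℝ × ℝ × ℝ => a * p.1 + b * p.2.1 + c * p.2.2 - 1)
      (S3 1 1 1) := (Continuous.continuousOn (by fun_prop)).integrableOn_compact hcomp1
  have hintm : IntegrableOn (fun p : ℝ × ℝ × ℝ =>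
      2 * max (1 - a * p.1 - b * p.2.1 - c * p.2.2) 0) (S3 1 1 1) :=
    (Continuous.continuousOn (by fun_prop)).integrableOn_compact hcomp1
  rw [show (fun p : ℝ × ℝ × ℝ => |a * p.1 + b * p.2.1 + c * p.2.2 - 1|)
      = fun p : ℝ × ℝ × ℝ => (a * p.1 + b * p.2.1 + c * p.2.2 - 1)
        + 2 * max (1 - a * p.1 - b * p.2.1 - c * p.2.2) 0 from funext habs]
  rw [integral_add hintu hintm, integral_const_mul]
  -- first piece
  have hfirst : (∫ p in S3 1 1 1, (a * p.1 + b * p.2.1 + c * p.2.2 - 1))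
      = (a + b + c)/24 - 1/6 := by
    have h := threeD 1 1 1 one_pos one_pos one_pos (fun x y z => a*x + b*y + c*z - 1)
      (by fun_prop)
    rw [h, calcB]
  -- second piece: restrict to small simplex
  have hsub : S3 a b c ⊆ S3 1 1 1 := by
    rintro ⟨x, y, z⟩ ⟨h1, h2, h3, h4⟩
    exact ⟨h1, h2, h3, by nlinarith⟩
  have hindeq : (S3 1 1 1).indicator
        (fun p : ℝ × ℝ × ℝ => max (1 - a * p.1 - b * p.2.1 - c * p.2.2) 0)
      = (S3 a b c).indicator
        (fun p : ℝ × ℝ × ℝ => 1 - a * p.1 - b * p.2.1 - c * p.2.2) := by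
    funext p
    by_cases hp : p ∈ S3 a b c
    · rw [Set.indicator_of_mem hp, Set.indicator_of_mem (hsub hp)]
      exact max_eq_left (by have := hp.2.2.2; linarith)
    · rw [Set.indicator_of_notMem hp]
      by_cases hp1 : p ∈ S3 1 1 1
      · rw [Set.indicator_of_mem hp1]
        apply max_eq_right
        rcases hp1 with ⟨h1, h2, h3, _⟩
        by_contra hlt
        push_neg at hlt
        exact hp ⟨h1, h2, h3, by linarith⟩
      · rw [Set.indicator_of_notMem hp1]
  have hsecond : (∫ p in S3 1 1 1, max (1 - a * p.1 - b * p.2.1 - c * p.2.2) 0)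
      = 1/(24*a*b*c) := by
    rw [← integral_indicator hmeas1, hindeq,
      integral_indicator (S3_closed a b c).measurableSet]
    have h := threeD a b c ha0 hb0 hc0 (fun x y z => 1 - a*x - b*y - c*z) (by fun_prop)
    rw [h, calcA a b c ha0 hb0 hc0]
  rw [hfirst, hsecond]
  have : a*b*c ≠ 0 := by positivity
  field_simp
  ring
end
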